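/- arXiv:2109.10045 — 2 statements merged into one kernel-verified Lean document; each statement's English description precedes it below -/
import Mathlib

section
/- Let A₁₁ ∈ ℍ^{m×n₁}, B₁₁ ∈ ℍ^{p₁×q}, A₂₂ ∈ ℍ^{m×n₂}, B₂₂ ∈ ℍ^{p₂×q}, A₃₃ ∈ ℍ^{m×n₃}, B₃₃ ∈ ℍ^{p₃×q}, T₁ ∈ ℍ^{m×q} be quaternion matrices. Define M₁ = R_{A₁₁}A₂₂, N₁ = B₂₂L_{B₁₁}, C = R_{M₁}R_{A₁₁}, D = L_{B₁₁}L_{N₁}, C₁ = CA₃₃, C₂ = R_{A₁₁}A₃₃, C₃ = R_{A₂₂}A₃₃, C₄ = A₃₃, D₁ = B₃₃, D₂ = B₃₃L_{B₂₂}, D₃ = B₃₃L_{B₁₁}, D₄ = B₃₃D, E₁ = CT₁, E₂ = R_{A₁₁}T₁L_{B₂₂}, E₃ = R_{A₂₂}T₁L_{B₁₁}, E₄ = T₁D, C₁₁ = (L_{C₂}, L_{C₄}) (block row), D₁₁ = (R_{D₁}; R_{D₃}) (block column), C₂₂ = L_{C₁}, D₂₂ = R_{D₂}, C₃₃ = L_{C₃},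 D₃₃ = R_{D₄}, E₁₁ = R_{C₁₁}C₂₂, E₂₂ = R_{C₁₁}C₃₃, E₃₃ = D₂₂L_{D₁₁}, F₁ = C₁⁺E₁D₁⁺ + L_{C₁}C₂⁺E₂D₂⁺, F₂ = C₃⁺E₃D₃⁺ + L_{C₃}C₄⁺E₄D₄⁺, F = F₂ − F₁, E = R_{C₁₁}FL_{D₁₁}, with Moore–Penrose inverses of all matrices appearing with ⁺ or in L_·, R_· given as hypotheses. Then the equation A₁₁Y₁B₁₁ + A₂₂Y₂B₂₂ + A₃₃Y₃B₃₃ = T₁ has a solution (Y₁, Y₂, Y₃) if and only if R_{Cᵢ}Eᵢ = 0 and EᵢL_{Dᵢ} = 0 for all i = 1,2,3,4, and R_{E₂₂}EL_{E₃₃} = 0. -/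
set_option linter.unusedSectionVars false
set_option maxHeartbeats 1000000

open Matrix

abbrev Hq : Type := Quaternion ℝ

/-- `Ap` is a Moore–Penrose inverse of `A`. -/
def IsMPInv {m n : Type*} [Fintype m] [Fintype n] (A : Matrix m n Hq) (Ap : Matrix n m Hq) :
    Prop :=
  A * Ap * A = A ∧ Ap * A * Ap = Ap ∧ (A * Ap)ᴴ = A * Ap ∧ (Ap * A)ᴴ = Ap * A

namespace MPAux

variable {a b c d : Type*}

theorem r2 [Fintype b] [Fintype c] {A : Matrix a b Hq} {B : Matrix b c Hq} {C : Matrix a c Hq}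
    (h : A * B = C) (X : Matrix c d Hq) : A * (B * X) = C * X := by
  rw [← Matrix.mul_assoc, h]

section mp
variable [Fintype a] [Fintype b] [DecidableEq a] [DecidableEq b]
variable {A : Matrix a b Hq} {Ap : Matrix b a Hq} (h : IsMPInv A Ap)
include h

theorem mpRA : (1 - A * Ap) * A = 0 := by
  rw [Matrix.sub_mul, Matrix.one_mul, h.1, sub_self]

theorem mpAL : A * (1 - Ap * A) = 0 := by
  rw [Matrix.mul_sub, Matrix.mul_one, ← Matrix.mul_assoc, h.1, sub_self]

theorem mpApR : Ap * (1 - A * Ap) = 0 := by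
  rw [Matrix.mul_sub, Matrix.mul_one, ← Matrix.mul_assoc, h.2.1, sub_self]

theorem mpLAp : (1 - Ap * A) * Ap = 0 := by
  rw [Matrix.sub_mul, Matrix.one_mul, h.2.1, sub_self]

theorem mpLherm : (1 - Ap * A)ᴴ = 1 - Ap * A := by
  rw [conjTranspose_sub, conjTranspose_one, h.2.2.2]

theorem mpRherm : (1 - A * Ap)ᴴ = 1 - A * Ap := by
  rw [conjTranspose_sub, conjTranspose_one, h.2.2.1]

/-- If `X * A = 0` then `X * (1 - A*Ap) = X`. -/
theorem absR [Fintype c] {X : Matrix c a Hq} (hx : X * A = 0) : X * (1 - A * Ap) = X := by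
  rw [Matrix.mul_sub, Matrix.mul_one, ← Matrix.mul_assoc, hx, Matrix.zero_mul, sub_zero]

/-- If `A * X = 0` then `(1 - Ap*A) * X = X`. -/
theorem absL {X : Matrix b c Hq} (hx : A * X = 0) : (1 - Ap * A) * X = X := by
  rw [Matrix.sub_mul, Matrix.one_mul, Matrix.mul_assoc, hx, Matrix.mul_zero, sub_zero]

/-- If `A * L = A` with `L` hermitian then `L * Ap = Ap`. -/
theorem hermAbsL {L : Matrix b b Hq} (hL : Lᴴ = L) (hAL : A * L = A) : L * Ap = Ap := by
  have h1 : Ap * A * L = Ap * A := by rw [Matrix.mul_assoc, hAL]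
  have h2 : L * (Ap * A) = Ap * A := by
    have h1' := congrArg conjTranspose h1
    rwa [conjTranspose_mul, hL, h.2.2.2] at h1'
  calc L * Ap = L * (Ap * A * Ap) := by rw [h.2.1]
  _ = L * (Ap * A) * Ap := by rw [← Matrix.mul_assoc]
  _ = Ap := by rw [h2, h.2.1]

/-- If `L * A = A` with `L` hermitian then `Ap * L = Ap`. -/
theorem hermAbsR {L : Matrix a a Hq} (hL : Lᴴ = L) (hLA : L * A = A) : Ap * L = Ap := by
  have h1 : L * (A * Ap) = A * Ap := by rw [← Matrix.mul_assoc, hLA]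
  have h2 : A * Ap * L = A * Ap := by
    have h1' := congrArg conjTranspose h1
    rwa [conjTranspose_mul, hL, h.2.2.1] at h1'
  calc Ap * L = Ap * A * Ap * L := by rw [h.2.1]
  _ = Ap * (A * Ap * L) := by simp only [Matrix.mul_assoc]
  _ = Ap * (A * Ap) := by rw [h2]
  _ = Ap := by rw [← Matrix.mul_assoc, h.2.1]

end mp
end MPAux

namespace MPAux

section twoTerm
variable {a b c d e f : Type*} [Fintype a] [Fintype b] [Fintype c] [Fintype d] [Fintype e]
  [Fintype f] [DecidableEq a] [DecidableEq b] [DecidableEq c] [DecidableEq d] [DecidableEq e]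
  [DecidableEq f]

set_option linter.unusedSectionVars false in
/-- Solvability of `A₁ X₁ B₁ + A₂ X₂ B₂ = T`. -/
theorem twoTerm (A₁ : Matrix a b Hq) (B₁ : Matrix c d Hq) (A₂ : Matrix a e Hq)
    (B₂ : Matrix f d Hq) (T : Matrix a d Hq)
    (A₁p : Matrix b a Hq) (B₁p : Matrix d c Hq) (A₂p : Matrix e a Hq) (B₂p : Matrix d f Hq)
    (hA₁ : IsMPInv A₁ A₁p) (hB₁ : IsMPInv B₁ B₁p) (hA₂ : IsMPInv A₂ A₂p) (hB₂ : IsMPInv B₂ B₂p)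
    (M : Matrix a e Hq) (hM : M = (1 - A₁ * A₁p) * A₂)
    (N : Matrix f d Hq) (hN : N = B₂ * (1 - B₁p * B₁))
    (Mp : Matrix e a Hq) (hMp : IsMPInv M Mp)
    (Np : Matrix d f Hq) (hNp : IsMPInv N Np) :
    (∃ (X₁ : Matrix b c Hq) (X₂ : Matrix e f Hq), A₁ * X₁ * B₁ + A₂ * X₂ * B₂ = T) ↔
      ((1 - M * Mp) * ((1 - A₁ * A₁p) * T) = 0 ∧
       (1 - A₁ * A₁p) * T * (1 - B₂p * B₂) = 0 ∧
       (1 - A₂ * A₂p) * T * (1 - B₁p * B₁) = 0 ∧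
       T * ((1 - B₁p * B₁) * (1 - Np * N)) = 0) := by
  have hM' : (1 - A₁ * A₁p) * A₂ = M := hM.symm
  have hN' : B₂ * (1 - B₁p * B₁) = N := hN.symm
  constructor
  · rintro ⟨X₁, X₂, rfl⟩
    refine ⟨?_, ?_, ?_, ?_⟩ <;>
      simp only [Matrix.mul_add, Matrix.add_mul, Matrix.mul_assoc, r2 (mpRA hA₁),
        r2 (mpRA hA₂), r2 hM', r2 (mpRA hMp), mpAL hB₁, mpAL hB₂, r2 (mpAL hB₁),
        r2 (mpAL hB₂), r2 hN', mpAL hNp, r2 (mpAL hNp), Matrix.zero_mul, Matrix.mul_zero,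
        add_zero, zero_add, mpRA hA₁, mpRA hA₂, mpRA hMp]
  · rintro ⟨h1, h2, h3, h4⟩
    have hR1idem : (1 - A₁ * A₁p) * (1 - A₁ * A₁p) = 1 - A₁ * A₁p := absR hA₁ (mpRA hA₁)
    have hR1M : (1 - A₁ * A₁p) * M = M := by rw [hM, ← Matrix.mul_assoc, hR1idem]
    have hMpR1 : Mp * (1 - A₁ * A₁p) = Mp := hermAbsR hMp (mpRherm hA₁) hR1M
    have c1 : M * (Mp * ((1 - A₁ * A₁p) * T)) = (1 - A₁ * A₁p) * T := by
      rw [Matrix.sub_mul, Matrix.one_mul, sub_eq_zero] at h1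
      rw [← Matrix.mul_assoc]; exact h1.symm
    have c2 : (1 - A₁ * A₁p) * T * (B₂p * B₂) = (1 - A₁ * A₁p) * T := by
      rw [Matrix.mul_sub, Matrix.mul_one, sub_eq_zero] at h2
      exact h2.symm
    have c3 : A₂ * (A₂p * (T * (1 - B₁p * B₁))) = T * (1 - B₁p * B₁) := by
      rw [Matrix.mul_assoc, Matrix.sub_mul, Matrix.one_mul, sub_eq_zero] at h3
      rw [← Matrix.mul_assoc]; exact h3.symm
    have c4 : T * (1 - B₁p * B₁) * (Np * N) = T * (1 - B₁p * B₁) := by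
      rw [← Matrix.mul_assoc, Matrix.mul_sub, Matrix.mul_one, sub_eq_zero] at h4
      exact h4.symm
    have c4' : T * ((1 - B₁p * B₁) * (Np * N)) = T * (1 - B₁p * B₁) := by
      rw [← Matrix.mul_assoc]; exact c4
    set X₂ := Mp * T * B₂p + (1 - Mp * M) * (A₂p * (T * ((1 - B₁p * B₁) * Np))) with hX₂
    have c2' : (1 - A₁ * A₁p) * (T * (B₂p * B₂)) = (1 - A₁ * A₁p) * T := by
      rw [← Matrix.mul_assoc]; exact c2
    have Ra : (1 - A₁ * A₁p) * (A₂ * X₂ * B₂) = (1 - A₁ * A₁p) * T := by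
      rw [hX₂]
      simp only [Matrix.mul_add, Matrix.add_mul, Matrix.mul_assoc, r2 hM', r2 (mpAL hMp),
        Matrix.zero_mul, Matrix.mul_zero, add_zero]
      rw [← r2 hMpR1 (T * (B₂p * B₂)), c2']
      exact c1
    have key1 : (1 - A₁ * A₁p) * (T * (B₂p * N)) = M * (A₂p * (T * (1 - B₁p * B₁))) := by
      calc (1 - A₁ * A₁p) * (T * (B₂p * N))
          = (1 - A₁ * A₁p) * T * (B₂p * B₂) * (1 - B₁p * B₁) := by
            rw [hN]; simp only [Matrix.mul_assoc]
        _ = (1 - A₁ * A₁p) * T * (1 - B₁p * B₁) := by rw [c2]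
        _ = (1 - A₁ * A₁p) * (A₂ * (A₂p * (T * (1 - B₁p * B₁)))) := by
            rw [Matrix.mul_assoc, c3]
        _ = M * (A₂p * (T * (1 - B₁p * B₁))) := r2 hM' _
    have Lb : A₂ * X₂ * B₂ * (1 - B₁p * B₁) = T * (1 - B₁p * B₁) := by
      rw [hX₂]
      simp only [Matrix.mul_add, Matrix.add_mul, Matrix.mul_assoc, hN', c4']
      rw [← r2 hMpR1 (T * (B₂p * N)), key1]
      rw [show (1 - Mp * M) * (A₂p * (T * (1 - B₁p * B₁)))
            = A₂p * (T * (1 - B₁p * B₁)) - Mp * (M * (A₂p * (T * (1 - B₁p * B₁)))) from by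
            rw [Matrix.sub_mul, Matrix.one_mul, Matrix.mul_assoc]]
      rw [show A₂ * (A₂p * (T * (1 - B₁p * B₁)) - Mp * (M * (A₂p * (T * (1 - B₁p * B₁)))))
            = A₂ * (A₂p * (T * (1 - B₁p * B₁))) - A₂ * (Mp * (M * (A₂p * (T * (1 - B₁p * B₁)))))
          from Matrix.mul_sub _ _ _, c3]
      abel
    refine ⟨A₁p * ((T - A₂ * X₂ * B₂) * B₁p), X₂, ?_⟩
    have hS1 : A₁ * (A₁p * (T - A₂ * X₂ * B₂)) = T - A₂ * X₂ * B₂ := by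
      have h0 : (1 - A₁ * A₁p) * (T - A₂ * X₂ * B₂) = 0 := by
        rw [Matrix.mul_sub, Ra, sub_self]
      rw [Matrix.sub_mul, Matrix.one_mul, sub_eq_zero] at h0
      rw [← Matrix.mul_assoc]; exact h0.symm
    have hS2 : (T - A₂ * X₂ * B₂) * (B₁p * B₁) = T - A₂ * X₂ * B₂ := by
      have h0 : (T - A₂ * X₂ * B₂) * (1 - B₁p * B₁) = 0 := by
        rw [Matrix.sub_mul, Lb, sub_self]
      rw [Matrix.mul_sub, Matrix.mul_one, sub_eq_zero] at h0
      exact h0.symm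
    calc A₁ * (A₁p * ((T - A₂ * X₂ * B₂) * B₁p)) * B₁ + A₂ * X₂ * B₂
        = A₁ * (A₁p * (T - A₂ * X₂ * B₂)) * (B₁p * B₁) + A₂ * X₂ * B₂ := by
          simp only [Matrix.mul_assoc]
      _ = (T - A₂ * X₂ * B₂) * (B₁p * B₁) + A₂ * X₂ * B₂ := by rw [hS1]
      _ = (T - A₂ * X₂ * B₂) + A₂ * X₂ * B₂ := by rw [hS2]
      _ = T := sub_add_cancel _ _

end twoTerm
end MPAux

namespace MPAux

section more
variable {a b c d : Type*} [Fintype a] [Fintype b] [Fintype c] [Fintype d]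
variable [DecidableEq a] [DecidableEq b] [DecidableEq c] [DecidableEq d]

theorem r3 [Fintype b] [Fintype c] {A : Matrix a b Hq} {B : Matrix b c Hq} {C : Matrix c d Hq}
    {D : Matrix a d Hq} {e : Type*} (h : A * (B * C) = D) (X : Matrix d e Hq) :
    A * (B * (C * X)) = D * X := by
  rw [show A * (B * (C * X)) = A * (B * C) * X from by simp only [Matrix.mul_assoc], h]

theorem subz_left' {A : Matrix a b Hq} {B : Matrix b a Hq} {X : Matrix a c Hq}
    (h : (1 - A * B) * X = 0) : A * (B * X) = X := by
  rw [Matrix.sub_mul, Matrix.one_mul, sub_eq_zero] at h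
  rw [← Matrix.mul_assoc]; exact h.symm

theorem subz_right' {A : Matrix b c Hq} {B : Matrix c b Hq} {X : Matrix a b Hq}
    (h : X * (1 - A * B) = 0) : X * (A * B) = X := by
  rw [Matrix.mul_sub, Matrix.mul_one, sub_eq_zero] at h
  exact h.symm

theorem split2m (A : Matrix a b Hq) (X₁ X₂ : Matrix b c Hq) (B : Matrix c d Hq) :
    A * (X₁ - X₂) * B = A * X₁ * B - A * X₂ * B := by
  simp only [Matrix.mul_sub, Matrix.sub_mul]

theorem split3p (A : Matrix a b Hq) (X₁ X₂ X₃ : Matrix b c Hq) (B : Matrix c d Hq) :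
    A * (X₁ + X₂ + X₃) * B = A * X₁ * B + A * X₂ * B + A * X₃ * B := by
  simp only [Matrix.mul_add, Matrix.add_mul]

theorem split4p (A : Matrix a b Hq) (X₁ X₂ X₃ X₄ : Matrix b c Hq) (B : Matrix c d Hq) :
    A * (X₁ + X₂ + X₃ + X₄) * B = A * X₁ * B + A * X₂ * B + A * X₃ * B + A * X₄ * B := by
  simp only [Matrix.mul_add, Matrix.add_mul]

theorem split4m (A : Matrix a b Hq) (X₁ X₂ X₃ X₄ : Matrix b c Hq) (B : Matrix c d Hq) :
    A * (X₁ + X₂ - X₃ - X₄) * B = A * X₁ * B + A * X₂ * B - A * X₃ * B - A * X₄ * B := by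
  simp only [Matrix.mul_add, Matrix.add_mul, Matrix.mul_sub, Matrix.sub_mul]

theorem decomp3 [DecidableEq a] [DecidableEq b] (Q : Matrix a a Hq) (H : Matrix a b Hq)
    (P : Matrix b b Hq) : H = (1 - Q) * H + Q * H * (1 - P) + Q * H * P := by
  simp only [Matrix.sub_mul, Matrix.mul_sub, Matrix.one_mul, Matrix.mul_one]
  abel

theorem colsFactor₁ [DecidableEq a] [DecidableEq b] (X : Matrix c a Hq) (Y : Matrix c b Hq) :
    fromCols X Y * fromRows (1 : Matrix a a Hq) (0 : Matrix b a Hq) = X := by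
  rw [fromCols_mul_fromRows, Matrix.mul_one, Matrix.mul_zero, add_zero]

theorem colsFactor₂ [DecidableEq a] [DecidableEq b] (X : Matrix c a Hq) (Y : Matrix c b Hq) :
    fromCols X Y * fromRows (0 : Matrix a b Hq) (1 : Matrix b b Hq) = Y := by
  rw [fromCols_mul_fromRows, Matrix.mul_one, Matrix.mul_zero, zero_add]

theorem rowsFactor₁ [DecidableEq a] [DecidableEq b] (X : Matrix a c Hq) (Y : Matrix b c Hq) :
    fromCols (1 : Matrix a a Hq) (0 : Matrix a b Hq) * fromRows X Y = X := by
  rw [fromCols_mul_fromRows, Matrix.one_mul, Matrix.zero_mul, add_zero]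

theorem rowsFactor₂ [DecidableEq a] [DecidableEq b] (X : Matrix a c Hq) (Y : Matrix b c Hq) :
    fromCols (0 : Matrix b a Hq) (1 : Matrix b b Hq) * fromRows X Y = Y := by
  rw [fromCols_mul_fromRows, Matrix.one_mul, Matrix.zero_mul, zero_add]

end more
end MPAux

namespace MPAux

section more2
variable {a b c d : Type*} [Fintype a] [Fintype b] [Fintype c] [Fintype d]

theorem split2p (A : Matrix a b Hq) (X₁ X₂ : Matrix b c Hq) (B : Matrix c d Hq) :
    A * (X₁ + X₂) * B = A * X₁ * B + A * X₂ * B := by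
  simp only [Matrix.mul_add, Matrix.add_mul]

theorem split3m (A : Matrix a b Hq) (X₁ X₂ X₃ : Matrix b c Hq) (B : Matrix c d Hq) :
    A * (X₁ - X₂ - X₃) * B = A * X₁ * B - A * X₂ * B - A * X₃ * B := by
  simp only [Matrix.mul_sub, Matrix.sub_mul]

theorem split4m2 (A : Matrix a b Hq) (X₁ X₂ X₃ X₄ : Matrix b c Hq) (B : Matrix c d Hq) :
    A * (X₁ - X₂ - X₃ - X₄) * B = A * X₁ * B - A * X₂ * B - A * X₃ * B - A * X₄ * B := by
  simp only [Matrix.mul_sub, Matrix.sub_mul]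

theorem innerSplit [DecidableEq b] (G : Matrix b b Hq) (Ep : Matrix b b Hq)
    (R : Matrix b b Hq) : (1 - G * (Ep * R)) * G = G - G * (Ep * (R * G)) := by
  rw [Matrix.sub_mul, Matrix.one_mul]
  simp only [Matrix.mul_assoc]

theorem projSplit [DecidableEq b] (X : Matrix a b Hq) (Q : Matrix b b Hq) (W : Matrix b c Hq) :
    X * W = X * (Q * W) + X * (1 - Q) * W := by
  simp only [Matrix.mul_sub, Matrix.sub_mul, Matrix.mul_one, Matrix.one_mul, Matrix.mul_assoc]
  abel

end more2
end MPAux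

open MPAux in
/-- Solvability conditions for the three-term two-sided Sylvester equation
`A₁₁Y₁B₁₁ + A₂₂Y₂B₂₂ + A₃₃Y₃B₃₃ = T₁`. -/
theorem stmt16 {m q n₁ p₁ n₂ p₂ n₃ p₃ : ℕ}
    (A₁₁ : Matrix (Fin m) (Fin n₁) Hq) (B₁₁ : Matrix (Fin p₁) (Fin q) Hq)
    (A₂₂ : Matrix (Fin m) (Fin n₂) Hq) (B₂₂ : Matrix (Fin p₂) (Fin q) Hq)
    (A₃₃ : Matrix (Fin m) (Fin n₃) Hq) (B₃₃ : Matrix (Fin p₃) (Fin q) Hq)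
    (T₁ : Matrix (Fin m) (Fin q) Hq)
    (A₁₁p : Matrix (Fin n₁) (Fin m) Hq) (B₁₁p : Matrix (Fin q) (Fin p₁) Hq)
    (A₂₂p : Matrix (Fin n₂) (Fin m) Hq) (B₂₂p : Matrix (Fin q) (Fin p₂) Hq)
    (hA₁₁ : IsMPInv A₁₁ A₁₁p) (hB₁₁ : IsMPInv B₁₁ B₁₁p)
    (hA₂₂ : IsMPInv A₂₂ A₂₂p) (hB₂₂ : IsMPInv B₂₂ B₂₂p)
    (M₁ : Matrix (Fin m) (Fin n₂) Hq) (hM₁ : M₁ = (1 - A₁₁ * A₁₁p) * A₂₂)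
    (N₁ : Matrix (Fin p₂) (Fin q) Hq) (hN₁ : N₁ = B₂₂ * (1 - B₁₁p * B₁₁))
    (M₁p : Matrix (Fin n₂) (Fin m) Hq) (hM₁p : IsMPInv M₁ M₁p)
    (N₁p : Matrix (Fin q) (Fin p₂) Hq) (hN₁p : IsMPInv N₁ N₁p)
    (C : Matrix (Fin m) (Fin m) Hq) (hC : C = (1 - M₁ * M₁p) * (1 - A₁₁ * A₁₁p))
    (D : Matrix (Fin q) (Fin q) Hq) (hD : D = (1 - B₁₁p * B₁₁) * (1 - N₁p * N₁))
    (C₁ : Matrix (Fin m) (Fin n₃) Hq) (hC₁ : C₁ = C * A₃₃)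
    (C₂ : Matrix (Fin m) (Fin n₃) Hq) (hC₂ : C₂ = (1 - A₁₁ * A₁₁p) * A₃₃)
    (C₃ : Matrix (Fin m) (Fin n₃) Hq) (hC₃ : C₃ = (1 - A₂₂ * A₂₂p) * A₃₃)
    (C₄ : Matrix (Fin m) (Fin n₃) Hq) (hC₄ : C₄ = A₃₃)
    (D₁ : Matrix (Fin p₃) (Fin q) Hq) (hD₁ : D₁ = B₃₃)
    (D₂ : Matrix (Fin p₃) (Fin q) Hq) (hD₂ : D₂ = B₃₃ * (1 - B₂₂p * B₂₂))
    (D₃ : Matrix (Fin p₃) (Fin q) Hq) (hD₃ : D₃ = B₃₃ * (1 - B₁₁p * B₁₁))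
    (D₄ : Matrix (Fin p₃) (Fin q) Hq) (hD₄ : D₄ = B₃₃ * D)
    (E₁ : Matrix (Fin m) (Fin q) Hq) (hE₁ : E₁ = C * T₁)
    (E₂ : Matrix (Fin m) (Fin q) Hq)
    (hE₂ : E₂ = (1 - A₁₁ * A₁₁p) * T₁ * (1 - B₂₂p * B₂₂))
    (E₃ : Matrix (Fin m) (Fin q) Hq)
    (hE₃ : E₃ = (1 - A₂₂ * A₂₂p) * T₁ * (1 - B₁₁p * B₁₁))
    (E₄ : Matrix (Fin m) (Fin q) Hq) (hE₄ : E₄ = T₁ * D)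
    (C₁p : Matrix (Fin n₃) (Fin m) Hq) (hC₁p : IsMPInv C₁ C₁p)
    (C₂p : Matrix (Fin n₃) (Fin m) Hq) (hC₂p : IsMPInv C₂ C₂p)
    (C₃p : Matrix (Fin n₃) (Fin m) Hq) (hC₃p : IsMPInv C₃ C₃p)
    (C₄p : Matrix (Fin n₃) (Fin m) Hq) (hC₄p : IsMPInv C₄ C₄p)
    (D₁p : Matrix (Fin q) (Fin p₃) Hq) (hD₁p : IsMPInv D₁ D₁p)
    (D₂p : Matrix (Fin q) (Fin p₃) Hq) (hD₂p : IsMPInv D₂ D₂p)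
    (D₃p : Matrix (Fin q) (Fin p₃) Hq) (hD₃p : IsMPInv D₃ D₃p)
    (D₄p : Matrix (Fin q) (Fin p₃) Hq) (hD₄p : IsMPInv D₄ D₄p)
    (C₁₁ : Matrix (Fin n₃) (Fin n₃ ⊕ Fin n₃) Hq)
    (hC₁₁ : C₁₁ = Matrix.fromCols (1 - C₂p * C₂) (1 - C₄p * C₄))
    (D₁₁ : Matrix (Fin p₃ ⊕ Fin p₃) (Fin p₃) Hq)
    (hD₁₁ : D₁₁ = Matrix.fromRows (1 - D₁ * D₁p) (1 - D₃ * D₃p))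
    (C₁₁p : Matrix (Fin n₃ ⊕ Fin n₃) (Fin n₃) Hq) (hC₁₁p : IsMPInv C₁₁ C₁₁p)
    (D₁₁p : Matrix (Fin p₃) (Fin p₃ ⊕ Fin p₃) Hq) (hD₁₁p : IsMPInv D₁₁ D₁₁p)
    (C₂₂ : Matrix (Fin n₃) (Fin n₃) Hq) (hC₂₂ : C₂₂ = 1 - C₁p * C₁)
    (D₂₂ : Matrix (Fin p₃) (Fin p₃) Hq) (hD₂₂ : D₂₂ = 1 - D₂ * D₂p)
    (C₃₃ : Matrix (Fin n₃) (Fin n₃) Hq) (hC₃₃ : C₃₃ = 1 - C₃p * C₃)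
    (D₃₃ : Matrix (Fin p₃) (Fin p₃) Hq) (hD₃₃ : D₃₃ = 1 - D₄ * D₄p)
    (E₁₁ : Matrix (Fin n₃) (Fin n₃) Hq) (hE₁₁ : E₁₁ = (1 - C₁₁ * C₁₁p) * C₂₂)
    (E₂₂ : Matrix (Fin n₃) (Fin n₃) Hq) (hE₂₂ : E₂₂ = (1 - C₁₁ * C₁₁p) * C₃₃)
    (E₃₃ : Matrix (Fin p₃) (Fin p₃) Hq) (hE₃₃ : E₃₃ = D₂₂ * (1 - D₁₁p * D₁₁))
    (E₂₂p : Matrix (Fin n₃) (Fin n₃) Hq) (hE₂₂p : IsMPInv E₂₂ E₂₂p)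
    (E₃₃p : Matrix (Fin p₃) (Fin p₃) Hq) (hE₃₃p : IsMPInv E₃₃ E₃₃p)
    (F₁ : Matrix (Fin n₃) (Fin p₃) Hq)
    (hF₁ : F₁ = C₁p * E₁ * D₁p + (1 - C₁p * C₁) * C₂p * E₂ * D₂p)
    (F₂ : Matrix (Fin n₃) (Fin p₃) Hq)
    (hF₂ : F₂ = C₃p * E₃ * D₃p + (1 - C₃p * C₃) * C₄p * E₄ * D₄p)
    (F : Matrix (Fin n₃) (Fin p₃) Hq) (hF : F = F₂ - F₁)
    (E : Matrix (Fin n₃) (Fin p₃) Hq)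
    (hE : E = (1 - C₁₁ * C₁₁p) * F * (1 - D₁₁p * D₁₁)) :
    (∃ (Y₁ : Matrix (Fin n₁) (Fin p₁) Hq) (Y₂ : Matrix (Fin n₂) (Fin p₂) Hq)
        (Y₃ : Matrix (Fin n₃) (Fin p₃) Hq),
        A₁₁ * Y₁ * B₁₁ + A₂₂ * Y₂ * B₂₂ + A₃₃ * Y₃ * B₃₃ = T₁) ↔
      ((1 - C₁ * C₁p) * E₁ = 0 ∧ E₁ * (1 - D₁p * D₁) = 0 ∧
       (1 - C₂ * C₂p) * E₂ = 0 ∧ E₂ * (1 - D₂p * D₂) = 0 ∧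
       (1 - C₃ * C₃p) * E₃ = 0 ∧ E₃ * (1 - D₃p * D₃) = 0 ∧
       (1 - C₄ * C₄p) * E₄ = 0 ∧ E₄ * (1 - D₄p * D₄) = 0 ∧
       (1 - E₂₂ * E₂₂p) * E * (1 - E₃₃p * E₃₃) = 0) := by
  classical
  -- ===== basic consequences =====
  have hCA11 : C * A₁₁ = 0 := by
    rw [hC, Matrix.mul_assoc, mpRA hA₁₁, Matrix.mul_zero]
  have hCA22 : C * A₂₂ = 0 := by
    rw [hC, Matrix.mul_assoc, ← hM₁, mpRA hM₁p]
  have hCRA11 : C * (1 - A₁₁ * A₁₁p) = C := absR hA₁₁ hCA11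
  have hCRA22 : C * (1 - A₂₂ * A₂₂p) = C := absR hA₂₂ hCA22
  have hB11D : B₁₁ * D = 0 := by
    rw [hD, ← Matrix.mul_assoc, mpAL hB₁₁, Matrix.zero_mul]
  have hB22D : B₂₂ * D = 0 := by
    rw [hD, ← Matrix.mul_assoc, ← hN₁, mpAL hN₁p]
  have hLB11D : (1 - B₁₁p * B₁₁) * D = D := absL hB₁₁ hB11D
  have hLB22D : (1 - B₂₂p * B₂₂) * D = D := absL hB₂₂ hB22D
  have hCC2 : C * C₂ = C₁ := by rw [hC₂, ← Matrix.mul_assoc, hCRA11, ← hC₁]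
  have hCC3 : C * C₃ = C₁ := by rw [hC₃, ← Matrix.mul_assoc, hCRA22, ← hC₁]
  have hC1L2 : C₁ * (1 - C₂p * C₂) = 0 := by
    rw [← hCC2, Matrix.mul_assoc, mpAL hC₂p, Matrix.mul_zero]
  have hC1L3 : C₁ * (1 - C₃p * C₃) = 0 := by
    rw [← hCC3, Matrix.mul_assoc, mpAL hC₃p, Matrix.mul_zero]
  have hRA22C4 : (1 - A₂₂ * A₂₂p) * C₄ = C₃ := by rw [hC₄, ← hC₃]
  have hRA11C4 : (1 - A₁₁ * A₁₁p) * C₄ = C₂ := by rw [hC₄, ← hC₂]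
  have hC3L4 : C₃ * (1 - C₄p * C₄) = 0 := by
    rw [← hRA22C4, Matrix.mul_assoc, mpAL hC₄p, Matrix.mul_zero]
  have hD1LB22 : D₁ * (1 - B₂₂p * B₂₂) = D₂ := by rw [hD₁, ← hD₂]
  have hD1LB11 : D₁ * (1 - B₁₁p * B₁₁) = D₃ := by rw [hD₁, ← hD₃]
  have hD1D : D₁ * D = D₄ := by rw [hD₁, ← hD₄]
  have hD2D : D₂ * D = D₄ := by rw [hD₂, Matrix.mul_assoc, hLB22D, ← hD₄]
  have hD3LN1 : D₃ * (1 - N₁p * N₁) = D₄ := by rw [hD₃, Matrix.mul_assoc, ← hD, ← hD₄]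
  have hR1D2 : (1 - D₁ * D₁p) * D₂ = 0 := by
    rw [← hD1LB22, ← Matrix.mul_assoc, mpRA hD₁p, Matrix.zero_mul]
  have hR1D3 : (1 - D₁ * D₁p) * D₃ = 0 := by
    rw [← hD1LB11, ← Matrix.mul_assoc, mpRA hD₁p, Matrix.zero_mul]
  have hR2D4 : (1 - D₂ * D₂p) * D₄ = 0 := by
    rw [← hD2D, ← Matrix.mul_assoc, mpRA hD₂p, Matrix.zero_mul]
  have hR3D4 : (1 - D₃ * D₃p) * D₄ = 0 := by
    rw [← hD3LN1, ← Matrix.mul_assoc, mpRA hD₃p, Matrix.zero_mul]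
  have hL1L3 : (1 - C₁p * C₁) * (1 - C₃p * C₃) = 1 - C₃p * C₃ := absL hC₁p hC1L3
  have hR2R4 : (1 - D₂ * D₂p) * (1 - D₄ * D₄p) = 1 - D₂ * D₂p := absR hD₄p hR2D4
  -- block facts
  have hRCL2 : (1 - C₁₁ * C₁₁p) * (1 - C₂p * C₂) = 0 := by
    rw [show (1 - C₂p * C₂) = C₁₁ * fromRows (1 : Matrix (Fin n₃) (Fin n₃) Hq) (0 : Matrix (Fin n₃) (Fin n₃) Hq) from by
        rw [hC₁₁, colsFactor₁],
      ← Matrix.mul_assoc, mpRA hC₁₁p, Matrix.zero_mul]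
  have hRCL4 : (1 - C₁₁ * C₁₁p) * (1 - C₄p * C₄) = 0 := by
    rw [show (1 - C₄p * C₄) = C₁₁ * fromRows (0 : Matrix (Fin n₃) (Fin n₃) Hq) (1 : Matrix (Fin n₃) (Fin n₃) Hq) from by
        rw [hC₁₁, colsFactor₂],
      ← Matrix.mul_assoc, mpRA hC₁₁p, Matrix.zero_mul]
  have hR1LD : (1 - D₁ * D₁p) * (1 - D₁₁p * D₁₁) = 0 := by
    rw [show (1 - D₁ * D₁p) = fromCols (1 : Matrix (Fin p₃) (Fin p₃) Hq) (0 : Matrix (Fin p₃) (Fin p₃) Hq) * D₁₁ from by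
        rw [hD₁₁, rowsFactor₁],
      Matrix.mul_assoc, mpAL hD₁₁p, Matrix.mul_zero]
  have hR3LD : (1 - D₃ * D₃p) * (1 - D₁₁p * D₁₁) = 0 := by
    rw [show (1 - D₃ * D₃p) = fromCols (0 : Matrix (Fin p₃) (Fin p₃) Hq) (1 : Matrix (Fin p₃) (Fin p₃) Hq) * D₁₁ from by
        rw [hD₁₁, rowsFactor₂],
      Matrix.mul_assoc, mpAL hD₁₁p, Matrix.mul_zero]
  have hP3LD : D₃ * (D₃p * (1 - D₁₁p * D₁₁)) = 1 - D₁₁p * D₁₁ := subz_left' hR3LD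
  have hRCQ2 : (1 - C₁₁ * C₁₁p) * (C₂p * C₂) = 1 - C₁₁ * C₁₁p := subz_right' hRCL2
  have hLB11idem : (1 - B₁₁p * B₁₁) * (1 - B₁₁p * B₁₁) = 1 - B₁₁p * B₁₁ :=
    absL hB₁₁ (mpAL hB₁₁)
  have hD3LB11 : D₃ * (1 - B₁₁p * B₁₁) = D₃ := by rw [hD₃, Matrix.mul_assoc, hLB11idem]
  have hLB11D3p : (1 - B₁₁p * B₁₁) * D₃p = D₃p := hermAbsL hD₃p (mpLherm hB₁₁) hD3LB11
  -- ===== step 1 : reduce to a system in Y₃ =====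
  have conv1 : ∀ Y : Matrix (Fin n₃) (Fin p₃) Hq,
      (1 - M₁ * M₁p) * ((1 - A₁₁ * A₁₁p) * (T₁ - A₃₃ * Y * B₃₃)) = E₁ - C₁ * Y * D₁ := by
    intro Y
    rw [hE₁, hC₁, hD₁, hC]
    simp only [Matrix.mul_sub, Matrix.sub_mul, Matrix.mul_one, Matrix.one_mul, Matrix.mul_assoc]
    try abel
  have conv2 : ∀ Y : Matrix (Fin n₃) (Fin p₃) Hq,
      (1 - A₁₁ * A₁₁p) * (T₁ - A₃₃ * Y * B₃₃) * (1 - B₂₂p * B₂₂) = E₂ - C₂ * Y * D₂ := by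
    intro Y
    rw [hE₂, hC₂, hD₂]
    simp only [Matrix.mul_sub, Matrix.sub_mul, Matrix.mul_one, Matrix.one_mul, Matrix.mul_assoc]
    try abel
  have conv3 : ∀ Y : Matrix (Fin n₃) (Fin p₃) Hq,
      (1 - A₂₂ * A₂₂p) * (T₁ - A₃₃ * Y * B₃₃) * (1 - B₁₁p * B₁₁) = E₃ - C₃ * Y * D₃ := by
    intro Y
    rw [hE₃, hC₃, hD₃]
    simp only [Matrix.mul_sub, Matrix.sub_mul, Matrix.mul_one, Matrix.one_mul, Matrix.mul_assoc]
    try abel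
  have conv4 : ∀ Y : Matrix (Fin n₃) (Fin p₃) Hq,
      (T₁ - A₃₃ * Y * B₃₃) * ((1 - B₁₁p * B₁₁) * (1 - N₁p * N₁)) = E₄ - C₄ * Y * D₄ := by
    intro Y
    rw [hE₄, hC₄, hD₄, hD]
    simp only [Matrix.mul_sub, Matrix.sub_mul, Matrix.mul_one, Matrix.one_mul, Matrix.mul_assoc]
    try abel
  have main1 : (∃ (Y₁ : Matrix (Fin n₁) (Fin p₁) Hq) (Y₂ : Matrix (Fin n₂) (Fin p₂) Hq)
        (Y₃ : Matrix (Fin n₃) (Fin p₃) Hq),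
        A₁₁ * Y₁ * B₁₁ + A₂₂ * Y₂ * B₂₂ + A₃₃ * Y₃ * B₃₃ = T₁) ↔
      ∃ Y₃ : Matrix (Fin n₃) (Fin p₃) Hq,
        C₁ * Y₃ * D₁ = E₁ ∧ C₂ * Y₃ * D₂ = E₂ ∧ C₃ * Y₃ * D₃ = E₃ ∧ C₄ * Y₃ * D₄ = E₄ := by
    constructor
    · rintro ⟨Y₁, Y₂, Y₃, hY⟩
      have hT' : A₁₁ * Y₁ * B₁₁ + A₂₂ * Y₂ * B₂₂ = T₁ - A₃₃ * Y₃ * B₃₃ := by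
        rw [eq_sub_iff_add_eq]; exact hY
      obtain ⟨k1, k2, k3, k4⟩ := (twoTerm A₁₁ B₁₁ A₂₂ B₂₂ (T₁ - A₃₃ * Y₃ * B₃₃) A₁₁p B₁₁p
        A₂₂p B₂₂p hA₁₁ hB₁₁ hA₂₂ hB₂₂ M₁ hM₁ N₁ hN₁ M₁p hM₁p N₁p hN₁p).mp ⟨Y₁, Y₂, hT'⟩
      rw [conv1 Y₃] at k1
      rw [conv2 Y₃] at k2
      rw [conv3 Y₃] at k3
      rw [conv4 Y₃] at k4
      exact ⟨Y₃, (sub_eq_zero.mp k1).symm, (sub_eq_zero.mp k2).symm, (sub_eq_zero.mp k3).symm,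
        (sub_eq_zero.mp k4).symm⟩
    · rintro ⟨Y₃, g1, g2, g3, g4⟩
      obtain ⟨Y₁, Y₂, hY⟩ := (twoTerm A₁₁ B₁₁ A₂₂ B₂₂ (T₁ - A₃₃ * Y₃ * B₃₃) A₁₁p B₁₁p
        A₂₂p B₂₂p hA₁₁ hB₁₁ hA₂₂ hB₂₂ M₁ hM₁ N₁ hN₁ M₁p hM₁p N₁p hN₁p).mpr
        ⟨by rw [conv1 Y₃, g1, sub_self], by rw [conv2 Y₃, g2, sub_self],
         by rw [conv3 Y₃, g3, sub_self], by rw [conv4 Y₃, g4, sub_self]⟩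
      exact ⟨Y₁, Y₂, Y₃, by rw [eq_sub_iff_add_eq] at hY; exact hY⟩
  rw [main1]
  have KEY : (1 - C₁ * C₁p) * E₁ = 0 → E₁ * (1 - D₁p * D₁) = 0 →
      (1 - C₂ * C₂p) * E₂ = 0 → E₂ * (1 - D₂p * D₂) = 0 →
      (1 - C₃ * C₃p) * E₃ = 0 → E₃ * (1 - D₃p * D₃) = 0 →
      (1 - C₄ * C₄p) * E₄ = 0 → E₄ * (1 - D₄p * D₄) = 0 →
      ((∃ Y₃ : Matrix (Fin n₃) (Fin p₃) Hq,
        C₁ * Y₃ * D₁ = E₁ ∧ C₂ * Y₃ * D₂ = E₂ ∧ C₃ * Y₃ * D₃ = E₃ ∧ C₄ * Y₃ * D₄ = E₄) ↔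
        (1 - E₂₂ * E₂₂p) * E * (1 - E₃₃p * E₃₃) = 0) := by
    intro hc1 hc2 hc3 hc4 hc5 hc6 hc7 hc8
    have e1P : C₁ * (C₁p * E₁) = E₁ := subz_left' hc1
    have e1Q : E₁ * (D₁p * D₁) = E₁ := subz_right' hc2
    have e2P : C₂ * (C₂p * E₂) = E₂ := subz_left' hc3
    have e2Q : E₂ * (D₂p * D₂) = E₂ := subz_right' hc4
    have e3P : C₃ * (C₃p * E₃) = E₃ := subz_left' hc5
    have e3Q : E₃ * (D₃p * D₃) = E₃ := subz_right' hc6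
    have e4P : C₄ * (C₄p * E₄) = E₄ := subz_left' hc7
    have e4Q : E₄ * (D₄p * D₄) = E₄ := subz_right' hc8
    have L1a : C₁ * F₁ * D₁ = E₁ := by
      rw [hF₁, split2p]
      have t2 : C₁ * ((1 - C₁p * C₁) * C₂p * E₂ * D₂p) * D₁ = 0 := by
        simp only [← Matrix.mul_assoc, mpAL hC₁p, Matrix.zero_mul]
      have t1 : C₁ * (C₁p * E₁ * D₁p) * D₁ = E₁ := by
        simp only [Matrix.mul_assoc]
        rw [e1Q, e1P]
      rw [t1, t2, add_zero]
    have s1 : E₁ * (D₁p * D₂) = C₁ * (C₂p * E₂) := by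
      rw [← hD1LB22, ← Matrix.mul_assoc D₁p D₁, ← Matrix.mul_assoc, e1Q]
      rw [hE₁]
      conv_lhs => rw [← hCRA11]
      rw [Matrix.mul_assoc, Matrix.mul_assoc]
      have hE₂' : E₂ = (1 - A₁₁ * A₁₁p) * (T₁ * (1 - B₂₂p * B₂₂)) := by
        rw [hE₂, Matrix.mul_assoc]
      rw [← hE₂']
      conv_lhs => rw [← e2P]
      rw [← Matrix.mul_assoc, hCC2]
    have L1b : C₂ * F₁ * D₂ = E₂ := by
      rw [hF₁, split2p]
      have t1 : C₂ * (C₁p * E₁ * D₁p) * D₂ = C₂ * (C₁p * (C₁ * (C₂p * E₂))) := by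
        simp only [Matrix.mul_assoc]
        rw [s1]
      have t2 : C₂ * ((1 - C₁p * C₁) * C₂p * E₂ * D₂p) * D₂
          = C₂ * (C₂p * E₂) - C₂ * (C₁p * (C₁ * (C₂p * E₂))) := by
        simp only [Matrix.mul_assoc]
        rw [e2Q, show (1 - C₁p * C₁) * (C₂p * E₂) = C₂p * E₂ - C₁p * (C₁ * (C₂p * E₂)) from by
          rw [Matrix.sub_mul, Matrix.one_mul, Matrix.mul_assoc], Matrix.mul_sub]
      rw [t1, t2, e2P]
      abel
    have L2a : C₃ * F₂ * D₃ = E₃ := by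
      rw [hF₂, split2p]
      have t2 : C₃ * ((1 - C₃p * C₃) * C₄p * E₄ * D₄p) * D₃ = 0 := by
        simp only [← Matrix.mul_assoc, mpAL hC₃p, Matrix.zero_mul]
      have t1 : C₃ * (C₃p * E₃ * D₃p) * D₃ = E₃ := by
        simp only [Matrix.mul_assoc]
        rw [e3Q, e3P]
      rw [t1, t2, add_zero]
    have s2 : E₃ * (D₃p * D₄) = C₃ * (C₄p * E₄) := by
      rw [← hD3LN1, ← Matrix.mul_assoc D₃p D₃, ← Matrix.mul_assoc, e3Q]
      rw [hE₃, Matrix.mul_assoc, ← hD, Matrix.mul_assoc, ← hE₄]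
      conv_lhs => rw [← e4P]
      rw [← Matrix.mul_assoc, hRA22C4]
    have L2b : C₄ * F₂ * D₄ = E₄ := by
      rw [hF₂, split2p]
      have t1 : C₄ * (C₃p * E₃ * D₃p) * D₄ = C₄ * (C₃p * (C₃ * (C₄p * E₄))) := by
        simp only [Matrix.mul_assoc]
        rw [s2]
      have t2 : C₄ * ((1 - C₃p * C₃) * C₄p * E₄ * D₄p) * D₄
          = C₄ * (C₄p * E₄) - C₄ * (C₃p * (C₃ * (C₄p * E₄))) := by
        simp only [Matrix.mul_assoc]
        rw [e4Q, show (1 - C₃p * C₃) * (C₄p * E₄) = C₄p * E₄ - C₃p * (C₃ * (C₄p * E₄)) from by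
          rw [Matrix.sub_mul, Matrix.one_mul, Matrix.mul_assoc], Matrix.mul_sub]
      rw [t1, t2, e4P]
      abel
    have hC1F1 : C₁ * F₁ = E₁ * D₁p := by
      rw [hF₁, Matrix.mul_add]
      have t2 : C₁ * ((1 - C₁p * C₁) * C₂p * E₂ * D₂p) = 0 := by
        simp only [← Matrix.mul_assoc, mpAL hC₁p, Matrix.zero_mul]
      rw [t2, add_zero]
      simp only [Matrix.mul_assoc]
      rw [r3 e1P D₁p]
    have hC1F2 : C₁ * F₂ = C * (E₃ * D₃p) := by
      rw [hF₂, Matrix.mul_add]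
      have t2 : C₁ * ((1 - C₃p * C₃) * C₄p * E₄ * D₄p) = 0 := by
        simp only [← Matrix.mul_assoc, hC1L3, Matrix.zero_mul]
      rw [t2, add_zero, ← hCC3]
      simp only [Matrix.mul_assoc]
      rw [r3 e3P D₃p]
    have hCE3 : C * E₃ = E₁ * (1 - B₁₁p * B₁₁) := by
      rw [hE₃, hE₁]
      simp only [← Matrix.mul_assoc]
      rw [hCRA22]
    have L3 : C₁ * F * (1 - D₁₁p * D₁₁) = 0 := by
      rw [hF, split2m, hC1F2, hC1F1]
      have u1 : C * (E₃ * D₃p) * (1 - D₁₁p * D₁₁) = E₁ * (D₃p * (1 - D₁₁p * D₁₁)) := by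
        rw [← Matrix.mul_assoc C E₃ D₃p, hCE3]
        simp only [Matrix.mul_assoc]
        rw [r2 hLB11D3p]
      have u2 : E₁ * D₁p * (1 - D₁₁p * D₁₁)
          = E₁ * (D₁p * D₁) * (D₃p * (1 - D₁₁p * D₁₁)) := by
        conv_lhs => rw [Matrix.mul_assoc, ← hP3LD]
        rw [← hD1LB11]
        simp only [← Matrix.mul_assoc]
        rw [show E₁ * D₁p * D₁ * (1 - B₁₁p * B₁₁) * D₃p = E₁ * D₁p * D₁ * D₃p from by
          rw [Matrix.mul_assoc (E₁ * D₁p * D₁), hLB11D3p]]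
      rw [u1, u2, e1Q, sub_self]
    have L3' : (1 - C₁₁ * C₁₁p) * F * (1 - D₁₁p * D₁₁) = E₁₁ * (F * (1 - D₁₁p * D₁₁)) := by
      rw [Matrix.mul_assoc]
      rw [projSplit (1 - C₁₁ * C₁₁p) (C₁p * C₁) (F * (1 - D₁₁p * D₁₁))]
      have z : C₁p * C₁ * (F * (1 - D₁₁p * D₁₁)) = 0 := by
        rw [Matrix.mul_assoc]
        rw [show C₁ * (F * (1 - D₁₁p * D₁₁)) = 0 from by rw [← Matrix.mul_assoc]; exact L3,
          Matrix.mul_zero]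
      rw [z, Matrix.mul_zero, zero_add, hE₁₁, hC₂₂]
    have hE2D : E₂ * D = (1 - A₁₁ * A₁₁p) * (T₁ * D) := by
      rw [hE₂]
      simp only [Matrix.mul_assoc]
      rw [hLB22D]
    have e2P' : C₂ * (C₂p * (E₂ * D)) = E₂ * D := r3 e2P D
    have hE1D : E₁ * D = C₁ * (C₂p * (E₂ * D)) := by
      rw [hE₁, Matrix.mul_assoc]
      conv_lhs => rw [← hCRA11]
      rw [Matrix.mul_assoc, ← hE2D]
      conv_lhs => rw [← e2P']
      rw [← Matrix.mul_assoc, hCC2]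
    have hF1D4 : F₁ * D₄ = C₂p * (E₂ * D) := by
      rw [hF₁, Matrix.add_mul]
      have t1 : C₁p * E₁ * D₁p * D₄ = C₁p * (C₁ * (C₂p * (E₂ * D))) := by
        rw [← hD1D]
        simp only [Matrix.mul_assoc]
        rw [← Matrix.mul_assoc D₁p D₁, ← Matrix.mul_assoc E₁, e1Q, hE1D]
      have t2 : (1 - C₁p * C₁) * C₂p * E₂ * D₂p * D₄ = (1 - C₁p * C₁) * (C₂p * (E₂ * D)) := by
        rw [← hD2D]
        simp only [Matrix.mul_assoc]
        rw [← Matrix.mul_assoc D₂p D₂, ← Matrix.mul_assoc E₂, e2Q]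
      rw [t1, t2, show (1 - C₁p * C₁) * (C₂p * (E₂ * D))
          = C₂p * (E₂ * D) - C₁p * (C₁ * (C₂p * (E₂ * D))) from by
          rw [Matrix.sub_mul, Matrix.one_mul, Matrix.mul_assoc]]
      abel
    have hF2D4 : F₂ * D₄ = C₄p * E₄ := by
      rw [hF₂, Matrix.add_mul]
      have t1 : C₃p * E₃ * D₃p * D₄ = C₃p * (C₃ * (C₄p * E₄)) := by
        simp only [Matrix.mul_assoc]
        rw [s2]
      have t2 : (1 - C₃p * C₃) * C₄p * E₄ * D₄p * D₄ = (1 - C₃p * C₃) * (C₄p * E₄) := by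
        simp only [Matrix.mul_assoc]
        rw [e4Q]
      rw [t1, t2, show (1 - C₃p * C₃) * (C₄p * E₄)
          = C₄p * E₄ - C₃p * (C₃ * (C₄p * E₄)) from by
          rw [Matrix.sub_mul, Matrix.one_mul, Matrix.mul_assoc]]
      abel
    have w24 : C₂ * (C₄p * E₄) = E₂ * D := by
      rw [← hRA11C4, Matrix.mul_assoc, e4P, hE₄, ← hE2D]
    have L4 : (1 - C₁₁ * C₁₁p) * F * D₄ = 0 := by
      rw [Matrix.mul_assoc, hF,
        show (F₂ - F₁) * D₄ = F₂ * D₄ - F₁ * D₄ from Matrix.sub_mul _ _ _, hF2D4, hF1D4,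
        Matrix.mul_sub]
      have v1 : (1 - C₁₁ * C₁₁p) * (C₄p * E₄) = (1 - C₁₁ * C₁₁p) * (C₂p * (E₂ * D)) := by
        conv_lhs => rw [← hRCQ2]
        rw [Matrix.mul_assoc, Matrix.mul_assoc, w24]
      rw [v1, sub_self]
    have L4' : E = (1 - C₁₁ * C₁₁p) * F * ((1 - D₄ * D₄p) * (1 - D₁₁p * D₁₁)) := by
      rw [hE]
      have split : (1 - D₁₁p * D₁₁)
          = D₄ * (D₄p * (1 - D₁₁p * D₁₁)) + (1 - D₄ * D₄p) * (1 - D₁₁p * D₁₁) := by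
        simp only [Matrix.sub_mul, Matrix.one_mul, ← Matrix.mul_assoc]
        abel
      conv_lhs => rw [split, Matrix.mul_add]
      rw [show (1 - C₁₁ * C₁₁p) * F * (D₄ * (D₄p * (1 - D₁₁p * D₁₁))) = 0 from by
          rw [← Matrix.mul_assoc, L4, Matrix.zero_mul], zero_add]
    constructor
    · rintro ⟨Y₃, g1, g2, g3, g4⟩
      have dH1 : C₁ * (Y₃ - F₁) * D₁ = 0 := by rw [split2m, g1, L1a, sub_self]
      have dH2 : C₂ * (Y₃ - F₁) * D₂ = 0 := by rw [split2m, g2, L1b, sub_self]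
      have dH3 : C₃ * (Y₃ - F₂) * D₃ = 0 := by rw [split2m, g3, L2a, sub_self]
      have dH4 : C₄ * (Y₃ - F₂) * D₄ = 0 := by rw [split2m, g4, L2b, sub_self]
      set H₁ := Y₃ - F₁ with hH₁
      set H₂ := Y₃ - F₂ with hH₂
      have hFH : F = H₁ - H₂ := by rw [hH₁, hH₂, hF]; abel
      set Z := C₂p * C₂ * H₁ * (D₁ * D₁p) with hZdef
      set Z' := C₄p * C₄ * H₂ * (D₃ * D₃p) with hZ'def
      have zC1 : C₁ * Z = 0 := by
        rw [hZdef]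
        simp only [← Matrix.mul_assoc]
        rw [show C₁ * C₂p * C₂ = C₁ from by rw [Matrix.mul_assoc]; exact subz_right' hC1L2]
        rw [dH1, Matrix.zero_mul]
      have zL : (1 - C₁p * C₁) * Z = Z := absL hC₁p zC1
      have zD2 : Z * D₂ = 0 := by
        rw [hZdef]
        simp only [Matrix.mul_assoc]
        rw [show D₁ * (D₁p * D₂) = D₂ from subz_left' hR1D2]
        rw [show C₂ * (H₁ * D₂) = 0 from by rw [← Matrix.mul_assoc]; exact dH2, Matrix.mul_zero]
      have zR : Z * (1 - D₂ * D₂p) = Z := absR hD₂p zD2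
      have z'C3 : C₃ * Z' = 0 := by
        rw [hZ'def]
        simp only [← Matrix.mul_assoc]
        rw [show C₃ * C₄p * C₄ = C₃ from by rw [Matrix.mul_assoc]; exact subz_right' hC3L4]
        rw [dH3, Matrix.zero_mul]
      have z'L : (1 - C₃p * C₃) * Z' = Z' := absL hC₃p z'C3
      have z'D4 : Z' * D₄ = 0 := by
        rw [hZ'def]
        simp only [Matrix.mul_assoc]
        rw [show D₃ * (D₃p * D₄) = D₄ from subz_left' hR3D4]
        rw [show C₄ * (H₂ * D₄) = 0 from by rw [← Matrix.mul_assoc]; exact dH4, Matrix.mul_zero]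
      have z'R : Z' * (1 - D₄ * D₄p) = Z' := absR hD₄p z'D4
      have w1 : (1 - C₁₁ * C₁₁p) * H₁ * (1 - D₁₁p * D₁₁)
          = (1 - C₁₁ * C₁₁p) * Z * (1 - D₁₁p * D₁₁) := by
        conv_lhs => rw [show H₁ = (1 - C₂p * C₂) * H₁ + C₂p * C₂ * H₁ * (1 - D₁ * D₁p)
            + C₂p * C₂ * H₁ * (D₁ * D₁p) from decomp3 _ _ _]
        rw [split3p]
        rw [show (1 - C₁₁ * C₁₁p) * ((1 - C₂p * C₂) * H₁) * (1 - D₁₁p * D₁₁) = 0 from by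
            rw [← Matrix.mul_assoc, hRCL2, Matrix.zero_mul, Matrix.zero_mul]]
        rw [show (1 - C₁₁ * C₁₁p) * (C₂p * C₂ * H₁ * (1 - D₁ * D₁p)) * (1 - D₁₁p * D₁₁) = 0
            from by simp only [Matrix.mul_assoc, hR1LD, Matrix.mul_zero]]
        rw [← hZdef, zero_add, zero_add]
      have w2 : (1 - C₁₁ * C₁₁p) * H₂ * (1 - D₁₁p * D₁₁)
          = (1 - C₁₁ * C₁₁p) * Z' * (1 - D₁₁p * D₁₁) := by
        conv_lhs => rw [show H₂ = (1 - C₄p * C₄) * H₂ + C₄p * C₄ * H₂ * (1 - D₃ * D₃p)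
            + C₄p * C₄ * H₂ * (D₃ * D₃p) from decomp3 _ _ _]
        rw [split3p]
        rw [show (1 - C₁₁ * C₁₁p) * ((1 - C₄p * C₄) * H₂) * (1 - D₁₁p * D₁₁) = 0 from by
            rw [← Matrix.mul_assoc, hRCL4, Matrix.zero_mul, Matrix.zero_mul]]
        rw [show (1 - C₁₁ * C₁₁p) * (C₄p * C₄ * H₂ * (1 - D₃ * D₃p)) * (1 - D₁₁p * D₁₁) = 0
            from by simp only [Matrix.mul_assoc, hR3LD, Matrix.mul_zero]]
        rw [← hZ'def, zero_add, zero_add]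
      have w3 : (1 - C₁₁ * C₁₁p) * Z * (1 - D₁₁p * D₁₁) = E₁₁ * Z * E₃₃ := by
        conv_lhs => rw [← zL, ← zR]
        rw [hE₁₁, hC₂₂, hE₃₃, hD₂₂]
        simp only [Matrix.mul_assoc]
      have w4 : (1 - C₁₁ * C₁₁p) * Z' * (1 - D₁₁p * D₁₁)
          = E₂₂ * Z' * ((1 - D₄ * D₄p) * (1 - D₁₁p * D₁₁)) := by
        conv_lhs => rw [← z'L, ← z'R]
        rw [hE₂₂, hC₃₃]
        simp only [Matrix.mul_assoc]
      have hEZZ : E = E₁₁ * Z * E₃₃ - E₂₂ * Z' * ((1 - D₄ * D₄p) * (1 - D₁₁p * D₁₁)) := by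
        rw [hE, hFH, split2m, w1, w2, w3, w4]
      rw [hEZZ]
      rw [show (1 - E₂₂ * E₂₂p) *
          (E₁₁ * Z * E₃₃ - E₂₂ * Z' * ((1 - D₄ * D₄p) * (1 - D₁₁p * D₁₁))) * (1 - E₃₃p * E₃₃)
          = (1 - E₂₂ * E₂₂p) * (E₁₁ * Z * E₃₃) * (1 - E₃₃p * E₃₃)
            - (1 - E₂₂ * E₂₂p) * (E₂₂ * Z' * ((1 - D₄ * D₄p) * (1 - D₁₁p * D₁₁)))
              * (1 - E₃₃p * E₃₃) from split2m _ _ _ _]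
      rw [show (1 - E₂₂ * E₂₂p) * (E₁₁ * Z * E₃₃) * (1 - E₃₃p * E₃₃) = 0 from by
          simp only [Matrix.mul_assoc, mpAL hE₃₃p, Matrix.mul_zero]]
      rw [show (1 - E₂₂ * E₂₂p) * (E₂₂ * Z' * ((1 - D₄ * D₄p) * (1 - D₁₁p * D₁₁)))
          * (1 - E₃₃p * E₃₃) = 0 from by
          simp only [← Matrix.mul_assoc, mpRA hE₂₂p, Matrix.zero_mul]]
      rw [sub_self]
    · intro hc9
      have hR2G : (1 - D₂ * D₂p) * ((1 - D₄ * D₄p) * (1 - D₁₁p * D₁₁)) = E₃₃ := by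
        rw [← Matrix.mul_assoc, hR2R4, hE₃₃, hD₂₂]
      have hEfromL3' : E = E₁₁ * (F * (1 - D₁₁p * D₁₁)) := by rw [hE]; exact L3'
      have c9a : (1 - E₂₂ * E₂₂p) * (E * (1 - E₃₃p * E₃₃)) = 0 := by
        rw [← Matrix.mul_assoc]; exact hc9
      have c9' : E₂₂ * (E₂₂p * (E * (1 - E₃₃p * E₃₃))) = E * (1 - E₃₃p * E₃₃) :=
        subz_left' c9a
      set W₃ := F * (1 - D₁₁p * D₁₁) * E₃₃p with hW₃
      set V₃ := E₂₂p * ((1 - C₁₁ * C₁₁p) * F *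
          (1 - (1 - D₄ * D₄p) * (1 - D₁₁p * D₁₁) * (E₃₃p * (1 - D₂ * D₂p)))) with hV₃
      have weq : E₁₁ * W₃ * E₃₃ = E * (E₃₃p * E₃₃) := by
        rw [hW₃, hEfromL3']
        simp only [Matrix.mul_assoc]
      have inner : (1 - C₁₁ * C₁₁p) * F *
          (1 - (1 - D₄ * D₄p) * (1 - D₁₁p * D₁₁) * (E₃₃p * (1 - D₂ * D₂p)))
          * ((1 - D₄ * D₄p) * (1 - D₁₁p * D₁₁)) = E * (1 - E₃₃p * E₃₃) := by
        rw [Matrix.mul_assoc ((1 - C₁₁ * C₁₁p) * F),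
          show (1 - (1 - D₄ * D₄p) * (1 - D₁₁p * D₁₁) * (E₃₃p * (1 - D₂ * D₂p)))
            * ((1 - D₄ * D₄p) * (1 - D₁₁p * D₁₁))
            = (1 - D₄ * D₄p) * (1 - D₁₁p * D₁₁)
              - (1 - D₄ * D₄p) * (1 - D₁₁p * D₁₁) * (E₃₃p *
                ((1 - D₂ * D₂p) * ((1 - D₄ * D₄p) * (1 - D₁₁p * D₁₁)))) from
            innerSplit _ _ _]
        rw [hR2G, Matrix.mul_sub]
        rw [show (1 - C₁₁ * C₁₁p) * F *
            ((1 - D₄ * D₄p) * (1 - D₁₁p * D₁₁) * (E₃₃p * E₃₃))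
            = ((1 - C₁₁ * C₁₁p) * F * ((1 - D₄ * D₄p) * (1 - D₁₁p * D₁₁))) * (E₃₃p * E₃₃)
            from by simp only [Matrix.mul_assoc]]
        rw [← L4', Matrix.mul_sub, Matrix.mul_one]
      have veq : E₂₂ * V₃ * ((1 - D₄ * D₄p) * (1 - D₁₁p * D₁₁)) = E * (1 - E₃₃p * E₃₃) := by
        rw [hV₃]
        rw [show E₂₂ * (E₂₂p * ((1 - C₁₁ * C₁₁p) * F *
            (1 - (1 - D₄ * D₄p) * (1 - D₁₁p * D₁₁) * (E₃₃p * (1 - D₂ * D₂p))))) *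
            ((1 - D₄ * D₄p) * (1 - D₁₁p * D₁₁))
            = E₂₂ * (E₂₂p * ((1 - C₁₁ * C₁₁p) * F *
            (1 - (1 - D₄ * D₄p) * (1 - D₁₁p * D₁₁) * (E₃₃p * (1 - D₂ * D₂p))) *
            ((1 - D₄ * D₄p) * (1 - D₁₁p * D₁₁)))) from by simp only [Matrix.mul_assoc],
          inner, c9']
      set F' := F - (1 - C₁p * C₁) * W₃ * (1 - D₂ * D₂p)
          - (1 - C₃p * C₃) * V₃ * (1 - D₄ * D₄p) with hF'def
      have a1 : (1 - C₁₁ * C₁₁p) * ((1 - C₁p * C₁) * W₃ * (1 - D₂ * D₂p)) * (1 - D₁₁p * D₁₁)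
          = E₁₁ * W₃ * E₃₃ := by
        rw [hE₁₁, hC₂₂, hE₃₃, hD₂₂]
        simp only [Matrix.mul_assoc]
      have a2 : (1 - C₁₁ * C₁₁p) * ((1 - C₃p * C₃) * V₃ * (1 - D₄ * D₄p)) * (1 - D₁₁p * D₁₁)
          = E₂₂ * V₃ * ((1 - D₄ * D₄p) * (1 - D₁₁p * D₁₁)) := by
        rw [hE₂₂, hC₃₃]
        simp only [Matrix.mul_assoc]
      have hF'0 : (1 - C₁₁ * C₁₁p) * F' * (1 - D₁₁p * D₁₁) = 0 := by
        rw [hF'def, split3m, a1, a2, weq, veq, ← hE, Matrix.mul_sub, Matrix.mul_one]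
        abel
      set Z₁ := C₁₁p * F' with hZ₁
      set Z₂ := (1 - C₁₁ * C₁₁p) * F' * D₁₁p with hZ₂
      have h0 : (1 - C₁₁ * C₁₁p) * F' * (D₁₁p * D₁₁) = (1 - C₁₁ * C₁₁p) * F' :=
        subz_right' hF'0
      have hsplit : C₁₁ * Z₁ + Z₂ * D₁₁ = F' := by
        rw [hZ₁, hZ₂, Matrix.mul_assoc ((1 - C₁₁ * C₁₁p) * F') D₁₁p D₁₁, h0,
          Matrix.sub_mul, Matrix.one_mul, ← Matrix.mul_assoc]
        abel
      have hCZ₁ : C₁₁ * Z₁ = (1 - C₂p * C₂) * Z₁.toRows₁ + (1 - C₄p * C₄) * Z₁.toRows₂ := by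
        conv_lhs => rw [hC₁₁, ← Matrix.fromRows_toRows Z₁]
        rw [fromCols_mul_fromRows]
      have hZ₂D : Z₂ * D₁₁
          = Z₂.toCols₁ * (1 - D₁ * D₁p) + Z₂.toCols₂ * (1 - D₃ * D₃p) := by
        conv_lhs => rw [hD₁₁, ← Matrix.fromCols_toCols Z₂]
        rw [fromCols_mul_fromRows]
      have hbig : (1 - C₂p * C₂) * Z₁.toRows₁ + (1 - C₄p * C₄) * Z₁.toRows₂
          + Z₂.toCols₁ * (1 - D₁ * D₁p) + Z₂.toCols₂ * (1 - D₃ * D₃p) = F' := by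
        calc (1 - C₂p * C₂) * Z₁.toRows₁ + (1 - C₄p * C₄) * Z₁.toRows₂
            + Z₂.toCols₁ * (1 - D₁ * D₁p) + Z₂.toCols₂ * (1 - D₃ * D₃p)
            = C₁₁ * Z₁ + Z₂ * D₁₁ := by rw [hCZ₁, hZ₂D]; abel
          _ = F' := hsplit
      have e2 : (1 - C₂p * C₂) * Z₁.toRows₁ + Z₂.toCols₁ * (1 - D₁ * D₁p)
          = F' - (1 - C₄p * C₄) * Z₁.toRows₂ - Z₂.toCols₂ * (1 - D₃ * D₃p) := by
        rw [← hbig]; abel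
      have hY₀alt : F₁ + (1 - C₂p * C₂) * Z₁.toRows₁ + Z₂.toCols₁ * (1 - D₁ * D₁p)
          + (1 - C₁p * C₁) * W₃ * (1 - D₂ * D₂p)
          = F₂ - (1 - C₃p * C₃) * V₃ * (1 - D₄ * D₄p) - (1 - C₄p * C₄) * Z₁.toRows₂
            - Z₂.toCols₂ * (1 - D₃ * D₃p) := by
        rw [show F₁ + (1 - C₂p * C₂) * Z₁.toRows₁ + Z₂.toCols₁ * (1 - D₁ * D₁p)
            + (1 - C₁p * C₁) * W₃ * (1 - D₂ * D₂p)
            = F₁ + ((1 - C₂p * C₂) * Z₁.toRows₁ + Z₂.toCols₁ * (1 - D₁ * D₁p))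
              + (1 - C₁p * C₁) * W₃ * (1 - D₂ * D₂p) from by abel, e2, hF'def, hF]
        abel
      set Y₀ := F₁ + (1 - C₂p * C₂) * Z₁.toRows₁ + Z₂.toCols₁ * (1 - D₁ * D₁p)
          + (1 - C₁p * C₁) * W₃ * (1 - D₂ * D₂p) with hY₀
      refine ⟨Y₀, ?_, ?_, ?_, ?_⟩
      · rw [hY₀, split4p]
        rw [show C₁ * ((1 - C₂p * C₂) * Z₁.toRows₁) * D₁ = 0 from by
            simp only [← Matrix.mul_assoc, hC1L2, Matrix.zero_mul]]
        rw [show C₁ * (Z₂.toCols₁ * (1 - D₁ * D₁p)) * D₁ = 0 from by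
            simp only [Matrix.mul_assoc, mpRA hD₁p, Matrix.mul_zero]]
        rw [show C₁ * ((1 - C₁p * C₁) * W₃ * (1 - D₂ * D₂p)) * D₁ = 0 from by
            simp only [← Matrix.mul_assoc, mpAL hC₁p, Matrix.zero_mul]]
        rw [L1a, add_zero, add_zero, add_zero]
      · rw [hY₀, split4p]
        rw [show C₂ * ((1 - C₂p * C₂) * Z₁.toRows₁) * D₂ = 0 from by
            simp only [← Matrix.mul_assoc, mpAL hC₂p, Matrix.zero_mul]]
        rw [show C₂ * (Z₂.toCols₁ * (1 - D₁ * D₁p)) * D₂ = 0 from by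
            simp only [Matrix.mul_assoc, hR1D2, Matrix.mul_zero]]
        rw [show C₂ * ((1 - C₁p * C₁) * W₃ * (1 - D₂ * D₂p)) * D₂ = 0 from by
            simp only [Matrix.mul_assoc, mpRA hD₂p, Matrix.mul_zero]]
        rw [L1b, add_zero, add_zero, add_zero]
      · rw [hY₀alt, split4m2]
        rw [show C₃ * ((1 - C₃p * C₃) * V₃ * (1 - D₄ * D₄p)) * D₃ = 0 from by
            simp only [← Matrix.mul_assoc, mpAL hC₃p, Matrix.zero_mul]]
        rw [show C₃ * ((1 - C₄p * C₄) * Z₁.toRows₂) * D₃ = 0 from by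
            simp only [← Matrix.mul_assoc, hC3L4, Matrix.zero_mul]]
        rw [show C₃ * (Z₂.toCols₂ * (1 - D₃ * D₃p)) * D₃ = 0 from by
            simp only [Matrix.mul_assoc, mpRA hD₃p, Matrix.mul_zero]]
        rw [L2a, sub_zero, sub_zero, sub_zero]
      · rw [hY₀alt, split4m2]
        rw [show C₄ * ((1 - C₃p * C₃) * V₃ * (1 - D₄ * D₄p)) * D₄ = 0 from by
            simp only [Matrix.mul_assoc, mpRA hD₄p, Matrix.mul_zero]]
        rw [show C₄ * ((1 - C₄p * C₄) * Z₁.toRows₂) * D₄ = 0 from by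
            simp only [← Matrix.mul_assoc, mpAL hC₄p, Matrix.zero_mul]]
        rw [show C₄ * (Z₂.toCols₂ * (1 - D₃ * D₃p)) * D₄ = 0 from by
            simp only [Matrix.mul_assoc, hR3D4, Matrix.mul_zero]]
        rw [L2b, sub_zero, sub_zero, sub_zero]
  constructor
  · rintro ⟨Y₃, g1, g2, g3, g4⟩
    have hc1 : (1 - C₁ * C₁p) * E₁ = 0 := by
      rw [← g1]; simp only [← Matrix.mul_assoc, mpRA hC₁p, Matrix.zero_mul]
    have hc2 : E₁ * (1 - D₁p * D₁) = 0 := by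
      rw [← g1]; simp only [Matrix.mul_assoc, mpAL hD₁p, Matrix.mul_zero]
    have hc3 : (1 - C₂ * C₂p) * E₂ = 0 := by
      rw [← g2]; simp only [← Matrix.mul_assoc, mpRA hC₂p, Matrix.zero_mul]
    have hc4 : E₂ * (1 - D₂p * D₂) = 0 := by
      rw [← g2]; simp only [Matrix.mul_assoc, mpAL hD₂p, Matrix.mul_zero]
    have hc5 : (1 - C₃ * C₃p) * E₃ = 0 := by
      rw [← g3]; simp only [← Matrix.mul_assoc, mpRA hC₃p, Matrix.zero_mul]
    have hc6 : E₃ * (1 - D₃p * D₃) = 0 := by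
      rw [← g3]; simp only [Matrix.mul_assoc, mpAL hD₃p, Matrix.mul_zero]
    have hc7 : (1 - C₄ * C₄p) * E₄ = 0 := by
      rw [← g4]; simp only [← Matrix.mul_assoc, mpRA hC₄p, Matrix.zero_mul]
    have hc8 : E₄ * (1 - D₄p * D₄) = 0 := by
      rw [← g4]; simp only [Matrix.mul_assoc, mpAL hD₄p, Matrix.mul_zero]
    exact ⟨hc1, hc2, hc3, hc4, hc5, hc6, hc7, hc8,
      (KEY hc1 hc2 hc3 hc4 hc5 hc6 hc7 hc8).mp ⟨Y₃, g1, g2, g3, g4⟩⟩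
  · rintro ⟨hc1, hc2, hc3, hc4, hc5, hc6, hc7, hc8, hc9⟩
    exact (KEY hc1 hc2 hc3 hc4 hc5 hc6 hc7 hc8).mpr hc9
end

section
/- Let C₁, C₂, C₃, C₄ ∈ ℍ^{·×n}, D₁, D₂, D₃, D₄ ∈ ℍ^{p×·} and E₁, E₂, E₃, E₄ be quaternion matrices of conformable sizes, with given Moore–Penrose inverses of C₁, C₂, C₃, C₄, D₁, D₂, D₃, D₄, of F₁₁ := C₂L_{C₁} and F₂₂ := C₄L_{C₃}. Assume the orthogonality conditions C₁L_{C₂} = 0, R_{D₁}D₂ = 0, C₃L_{C₄} = 0, R_{D₃}D₄ = 0 and the consistency conditions R_{Cᵢ}Eᵢ = 0, EᵢL_{Dᵢ} = 0 (i = 1,2,3,4), R_{F₁₁}(E₂ − C₂C₁⁺E₁D₁⁺D₂) = 0, R_{F₂₂}(E₄ − C₄C₃⁺E₃D₃⁺D₄) = 0. Put F₁ = C₁⁺E₁D₁⁺ + L_{C₁}C₂⁺E₂D₂⁺, F₂ = C₃⁺E₃D₃⁺ + L_{C₃}C₄⁺E₄D₄⁺, F = F₂ − F₁, C₁₁ =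 (L_{C₂}, L_{C₄}) (block row), D₁₁ = (R_{D₁}; R_{D₃}) (block column), C₂₂ = L_{C₁}, D₂₂ = R_{D₂}, C₃₃ = L_{C₃}, D₃₃ = R_{D₄}. Then there exists a matrix Y ∈ ℍ^{n×p} satisfying simultaneously C₁YD₁ = E₁, C₂YD₂ = E₂, C₃YD₃ = E₃ and C₄YD₄ = E₄ if and only if there exist matrices V₁, W₁, V₂, W₂, V₃, W₃ such that C₁₁·(V₁; W₁) + (V₂, W₂)·D₁₁ + C₂₂V₃D₂₂ + C₃₃W₃D₃₃ = F. -/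
open Matrix

lemma pairHom {a b n p da db : ℕ}
    (C1 : Matrix (Fin a) (Fin n) Hq) (C2 : Matrix (Fin b) (Fin n) Hq)
    (D1 : Matrix (Fin p) (Fin da) Hq) (D2 : Matrix (Fin p) (Fin db) Hq)
    (C1p : Matrix (Fin n) (Fin a) Hq)
    (C2p : Matrix (Fin n) (Fin b) Hq) (h2 : IsMPInv C2 C2p)
    (D1p : Matrix (Fin da) (Fin p) Hq)
    (D2p : Matrix (Fin db) (Fin p) Hq)
    (ho1 : C1 * (1 - C2p * C2) = 0) (ho2 : (1 - D1 * D1p) * D2 = 0)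
    (Z : Matrix (Fin n) (Fin p) Hq)
    (hZ1 : C1 * Z * D1 = 0) (hZ2 : C2 * Z * D2 = 0) :
    ∃ V1 V2 V3 : Matrix (Fin n) (Fin p) Hq,
      (1 - C2p * C2) * V1 + V2 * (1 - D1 * D1p)
        + (1 - C1p * C1) * V3 * (1 - D2 * D2p) = Z := by
  have hc1 : C1 * C2p * C2 = C1 := by
    have h := ho1
    rw [Matrix.mul_sub, Matrix.mul_one, sub_eq_zero, ← Matrix.mul_assoc] at h
    exact h.symm
  have hd2 : D1 * D1p * D2 = D2 := by
    have h := ho2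
    rw [Matrix.sub_mul, Matrix.one_mul, sub_eq_zero] at h
    exact h.symm
  have hd2' : ∀ {k : ℕ} (X : Matrix (Fin k) (Fin p) Hq), X * D1 * D1p * D2 = X * D2 := by
    intro k X
    rw [Matrix.mul_assoc, Matrix.mul_assoc, ← Matrix.mul_assoc D1, hd2]
  set T : Matrix (Fin n) (Fin p) Hq := C2p * C2 * Z with hT
  set S : Matrix (Fin n) (Fin p) Hq := T * (D1 * D1p) with hS
  set U : Matrix (Fin n) (Fin p) Hq := S * (D2 * D2p) with hU
  have hCS : C1 * S = 0 := by
    rw [hS, hT]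
    simp only [← Matrix.mul_assoc]
    rw [hc1, hZ1, Matrix.zero_mul]
  have hCU : C2 * U = 0 := by
    rw [hU, hS, hT]
    simp only [← Matrix.mul_assoc]
    rw [h2.1, hd2' (C2 * Z), hZ2, Matrix.zero_mul]
  refine ⟨Z + U, T, S, ?_⟩
  have e1 : (1 - C2p * C2) * (Z + U) = Z + U - T - C2p * (C2 * U) := by
    rw [Matrix.sub_mul, Matrix.one_mul, Matrix.mul_add, hT, Matrix.mul_assoc,
      Matrix.mul_assoc C2p C2 U]
    abel
  have e2 : T * (1 - D1 * D1p) = T - S := by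
    rw [Matrix.mul_sub, Matrix.mul_one, ← hS]
  have e3 : (1 - C1p * C1) * S * (1 - D2 * D2p) = S - U := by
    rw [Matrix.sub_mul, Matrix.one_mul, Matrix.mul_assoc C1p C1 S, hCS, Matrix.mul_zero,
      sub_zero, Matrix.mul_sub, Matrix.mul_one, ← hU]
  rw [e1, e2, e3, hCU, Matrix.mul_zero]
  abel


lemma pairSol {a b n p da db : ℕ}
    (C1 : Matrix (Fin a) (Fin n) Hq) (C2 : Matrix (Fin b) (Fin n) Hq)
    (D1 : Matrix (Fin p) (Fin da) Hq) (D2 : Matrix (Fin p) (Fin db) Hq)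
    (E1 : Matrix (Fin a) (Fin da) Hq) (E2 : Matrix (Fin b) (Fin db) Hq)
    (C1p : Matrix (Fin n) (Fin a) Hq) (h1 : IsMPInv C1 C1p)
    (C2p : Matrix (Fin n) (Fin b) Hq) (h2 : IsMPInv C2 C2p)
    (D1p : Matrix (Fin da) (Fin p) Hq) (h3 : IsMPInv D1 D1p)
    (D2p : Matrix (Fin db) (Fin p) Hq) (h4 : IsMPInv D2 D2p)
    (F11 : Matrix (Fin b) (Fin n) Hq) (hF11 : F11 = C2 * (1 - C1p * C1))
    (F11p : Matrix (Fin n) (Fin b) Hq) (hF11p : IsMPInv F11 F11p)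
    (ho1 : C1 * (1 - C2p * C2) = 0)
    (hc1 : (1 - C1 * C1p) * E1 = 0) (hc1' : E1 * (1 - D1p * D1) = 0)
    (hc2' : E2 * (1 - D2p * D2) = 0)
    (hG : (1 - F11 * F11p) * (E2 - C2 * C1p * E1 * D1p * D2) = 0) :
    C1 * (C1p * E1 * D1p + (1 - C1p * C1) * C2p * E2 * D2p) * D1 = E1 ∧
    C2 * (C1p * E1 * D1p + (1 - C1p * C1) * C2p * E2 * D2p) * D2 = E2 := by
  have hE1a : C1 * C1p * E1 = E1 := by
    rw [Matrix.sub_mul, Matrix.one_mul, sub_eq_zero] at hc1; exact hc1.symm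
  have hE1b : E1 * (D1p * D1) = E1 := by
    rw [Matrix.mul_sub, Matrix.mul_one, sub_eq_zero] at hc1'; exact hc1'.symm
  have hE2b : E2 * (D2p * D2) = E2 := by
    rw [Matrix.mul_sub, Matrix.mul_one, sub_eq_zero] at hc2'; exact hc2'.symm
  have z3 : C1 * (1 - C1p * C1) = 0 := by
    rw [Matrix.mul_sub, Matrix.mul_one, ← Matrix.mul_assoc, h1.1, sub_self]
  constructor
  · simp only [Matrix.mul_add, Matrix.add_mul, ← Matrix.mul_assoc]
    rw [z3]
    simp only [Matrix.zero_mul, add_zero]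
    rw [hE1a, Matrix.mul_assoc, hE1b]
  · -- the hard part
    set L : Matrix (Fin n) (Fin n) Hq := 1 - C1p * C1 with hL
    have hLH : Lᴴ = L := by
      rw [hL, conjTranspose_sub, conjTranspose_one, h1.2.2.2]
    have hLL : L * L = L := by
      have hPP : C1p * C1 * (C1p * C1) = C1p * C1 := by
        rw [← Matrix.mul_assoc, h1.2.1]
      rw [hL, Matrix.sub_mul, Matrix.one_mul, Matrix.mul_sub, Matrix.mul_one, hPP]
      abel
    have hLL' : ∀ {k : ℕ} (X : Matrix (Fin n) (Fin k) Hq), L * (L * X) = L * X := by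
      intro k X; rw [← Matrix.mul_assoc, hLL]
    have hLC1p : L * C1p = 0 := by
      rw [hL, Matrix.sub_mul, Matrix.one_mul, h1.2.1, sub_self]
    have hLC1p' : ∀ {k : ℕ} (X : Matrix (Fin a) (Fin k) Hq), L * (C1p * X) = 0 := by
      intro k X; rw [← Matrix.mul_assoc, hLC1p, Matrix.zero_mul]
    have hF11H : F11ᴴ = L * C2ᴴ := by
      rw [hF11, conjTranspose_mul, hLH]
    have sA : F11p * F11 = L * (C2ᴴ * F11pᴴ) := by
      conv_lhs => rw [← hF11p.2.2.2]
      rw [conjTranspose_mul, hF11H, Matrix.mul_assoc]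
    have p1 : C2p * C2 * C2ᴴ = C2ᴴ := by
      calc C2p * C2 * C2ᴴ = (C2p * C2)ᴴ * C2ᴴ := by rw [h2.2.2.2]
        _ = (C2 * (C2p * C2))ᴴ := by rw [← conjTranspose_mul]
        _ = C2ᴴ := by rw [← Matrix.mul_assoc, h2.1]
    have p1' : ∀ {k : ℕ} (X : Matrix (Fin b) (Fin k) Hq),
        C2p * (C2 * (C2ᴴ * X)) = C2ᴴ * X := by
      intro k X; rw [← Matrix.mul_assoc, ← Matrix.mul_assoc, p1]
    have q0 : C2p * C2 * C1ᴴ = C1ᴴ := by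
      have q := congrArg conjTranspose ho1
      simp only [conjTranspose_mul, conjTranspose_sub, conjTranspose_one, h2.2.2.2,
        conjTranspose_zero] at q
      rw [Matrix.sub_mul, Matrix.one_mul, sub_eq_zero] at q
      exact q.symm
    have r : C1p = C1ᴴ * (C1pᴴ * C1p) := by
      calc C1p = C1p * C1 * C1p := (h1.2.1).symm
        _ = (C1p * C1)ᴴ * C1p := by rw [h1.2.2.2]
        _ = C1ᴴ * (C1pᴴ * C1p) := by rw [conjTranspose_mul, Matrix.mul_assoc]
    have p2 : C2p * C2 * C1p = C1p := by
      conv_lhs => rw [r]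
      rw [← Matrix.mul_assoc, q0, ← r]
    have p2' : ∀ {k : ℕ} (X : Matrix (Fin a) (Fin k) Hq),
        C2p * (C2 * (C1p * X)) = C1p * X := by
      intro k X; rw [← Matrix.mul_assoc, ← Matrix.mul_assoc, p2]
    -- normalize hG and goal to right-assoc
    simp only [Matrix.mul_assoc] at hG ⊢
    set G : Matrix (Fin b) (Fin db) Hq := E2 - C2 * (C1p * (E1 * (D1p * D2))) with hGdef
    have hGe0 : G = F11 * (F11p * G) := by
      rw [Matrix.sub_mul, Matrix.one_mul, sub_eq_zero, Matrix.mul_assoc] at hG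
      exact hG
    have hGe2 : G = C2 * (L * (C2ᴴ * (F11pᴴ * (F11p * G)))) := by
      calc G = F11 * (F11p * G) := hGe0
        _ = F11 * (F11p * F11 * F11p * G) := by
            conv_lhs => rw [← hF11p.2.1]
        _ = F11 * (L * (C2ᴴ * F11pᴴ) * F11p * G) := by rw [sA]
        _ = C2 * (L * (L * (C2ᴴ * (F11pᴴ * (F11p * G))))) := by
            rw [hF11]; simp only [Matrix.mul_assoc]
        _ = C2 * (L * (C2ᴴ * (F11pᴴ * (F11p * G)))) := by rw [hLL']
    have key : ∀ (X : Matrix (Fin b) (Fin db) Hq),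
        C2 * (L * (C2p * (C2 * (L * (C2ᴴ * X))))) = C2 * (L * (C2ᴴ * X)) := by
      intro X
      have hLexp : L * (C2ᴴ * X) = C2ᴴ * X - C1p * (C1 * (C2ᴴ * X)) := by
        rw [hL, Matrix.sub_mul, Matrix.one_mul, Matrix.mul_assoc]
      have inner : C2p * (C2 * (L * (C2ᴴ * X))) = L * (C2ᴴ * X) := by
        rw [hLexp, Matrix.mul_sub, Matrix.mul_sub, p1', p2']
      rw [inner, hLL']
    have claim1 : C2 * (L * (C2p * G)) = G := by
      conv_lhs => rw [hGe2]
      rw [key, ← hGe2]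
    have zclaim : C2 * (L * (C2p * (C2 * (C1p * (E1 * (D1p * D2)))))) = 0 := by
      rw [p2', hLC1p', Matrix.mul_zero]
    have final : C2 * (L * (C2p * E2)) = G := by
      have e : C2 * (L * (C2p * G)) =
          C2 * (L * (C2p * E2)) - C2 * (L * (C2p * (C2 * (C1p * (E1 * (D1p * D2)))))) := by
        rw [hGdef, Matrix.mul_sub, Matrix.mul_sub, Matrix.mul_sub]
      rw [claim1, zclaim, sub_zero] at e
      exact e.symm
    -- finish
    simp only [Matrix.mul_add, Matrix.add_mul, Matrix.mul_assoc, hE2b]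
    rw [final, hGdef]
    abel


lemma pertSolves {a b n p da db : ℕ}
    (C1 : Matrix (Fin a) (Fin n) Hq) (C2 : Matrix (Fin b) (Fin n) Hq)
    (D1 : Matrix (Fin p) (Fin da) Hq) (D2 : Matrix (Fin p) (Fin db) Hq)
    (C1p : Matrix (Fin n) (Fin a) Hq) (h1 : IsMPInv C1 C1p)
    (C2p : Matrix (Fin n) (Fin b) Hq) (h2 : IsMPInv C2 C2p)
    (D1p : Matrix (Fin da) (Fin p) Hq) (h3 : IsMPInv D1 D1p)
    (D2p : Matrix (Fin db) (Fin p) Hq) (h4 : IsMPInv D2 D2p)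
    (ho1 : C1 * (1 - C2p * C2) = 0) (ho2 : (1 - D1 * D1p) * D2 = 0)
    (Y F1 V1 V2 V3 : Matrix (Fin n) (Fin p) Hq)
    (hY : Y = F1 + ((1 - C2p * C2) * V1 + V2 * (1 - D1 * D1p)
      + (1 - C1p * C1) * V3 * (1 - D2 * D2p))) :
    C1 * Y * D1 = C1 * F1 * D1 ∧ C2 * Y * D2 = C2 * F1 * D2 := by
  have c0 : C1 * (1 - C1p * C1) = 0 := by
    rw [Matrix.mul_sub, Matrix.mul_one, ← Matrix.mul_assoc, h1.1, sub_self]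
  have d0 : C2 * (1 - C2p * C2) = 0 := by
    rw [Matrix.mul_sub, Matrix.mul_one, ← Matrix.mul_assoc, h2.1, sub_self]
  have b0 : (1 - D1 * D1p) * D1 = 0 := by
    rw [Matrix.sub_mul, Matrix.one_mul, h3.1, sub_self]
  have f0 : (1 - D2 * D2p) * D2 = 0 := by
    rw [Matrix.sub_mul, Matrix.one_mul, h4.1, sub_self]
  have b0' : ∀ {k : ℕ} (X : Matrix (Fin k) (Fin p) Hq), X * (1 - D1 * D1p) * D1 = 0 := by
    intro k X; rw [Matrix.mul_assoc, b0, Matrix.mul_zero]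
  have e0' : ∀ {k : ℕ} (X : Matrix (Fin k) (Fin p) Hq), X * (1 - D1 * D1p) * D2 = 0 := by
    intro k X; rw [Matrix.mul_assoc, ho2, Matrix.mul_zero]
  have f0' : ∀ {k : ℕ} (X : Matrix (Fin k) (Fin p) Hq), X * (1 - D2 * D2p) * D2 = 0 := by
    intro k X; rw [Matrix.mul_assoc, f0, Matrix.mul_zero]
  constructor
  · rw [hY]
    simp only [Matrix.mul_add, Matrix.add_mul, ← Matrix.mul_assoc, ho1, c0,
      Matrix.zero_mul, b0', add_zero, zero_add]
  · rw [hY]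
    simp only [Matrix.mul_add, Matrix.add_mul, ← Matrix.mul_assoc, d0, e0', f0',
      Matrix.zero_mul, add_zero, zero_add]


/-- Reduction of the four-equation system `CᵢYDᵢ = Eᵢ` (i = 1,…,4) to the single
block equation `C₁₁(V₁;W₁) + (V₂,W₂)D₁₁ + C₂₂V₃D₂₂ + C₃₃W₃D₃₃ = F`. -/
theorem stmt17 {c₁ c₂ c₃ c₄ n p d₁ d₂ d₃ d₄ : ℕ}
    (C₁ : Matrix (Fin c₁) (Fin n) Hq) (C₂ : Matrix (Fin c₂) (Fin n) Hq)
    (C₃ : Matrix (Fin c₃) (Fin n) Hq) (C₄ : Matrix (Fin c₄) (Fin n) Hq)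
    (D₁ : Matrix (Fin p) (Fin d₁) Hq) (D₂ : Matrix (Fin p) (Fin d₂) Hq)
    (D₃ : Matrix (Fin p) (Fin d₃) Hq) (D₄ : Matrix (Fin p) (Fin d₄) Hq)
    (E₁ : Matrix (Fin c₁) (Fin d₁) Hq) (E₂ : Matrix (Fin c₂) (Fin d₂) Hq)
    (E₃ : Matrix (Fin c₃) (Fin d₃) Hq) (E₄ : Matrix (Fin c₄) (Fin d₄) Hq)
    (C₁p : Matrix (Fin n) (Fin c₁) Hq) (hC₁p : IsMPInv C₁ C₁p)
    (C₂p : Matrix (Fin n) (Fin c₂) Hq) (hC₂p : IsMPInv C₂ C₂p)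
    (C₃p : Matrix (Fin n) (Fin c₃) Hq) (hC₃p : IsMPInv C₃ C₃p)
    (C₄p : Matrix (Fin n) (Fin c₄) Hq) (hC₄p : IsMPInv C₄ C₄p)
    (D₁p : Matrix (Fin d₁) (Fin p) Hq) (hD₁p : IsMPInv D₁ D₁p)
    (D₂p : Matrix (Fin d₂) (Fin p) Hq) (hD₂p : IsMPInv D₂ D₂p)
    (D₃p : Matrix (Fin d₃) (Fin p) Hq) (hD₃p : IsMPInv D₃ D₃p)
    (D₄p : Matrix (Fin d₄) (Fin p) Hq) (hD₄p : IsMPInv D₄ D₄p)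
    (F₁₁ : Matrix (Fin c₂) (Fin n) Hq) (hF₁₁ : F₁₁ = C₂ * (1 - C₁p * C₁))
    (F₂₂ : Matrix (Fin c₄) (Fin n) Hq) (hF₂₂ : F₂₂ = C₄ * (1 - C₃p * C₃))
    (F₁₁p : Matrix (Fin n) (Fin c₂) Hq) (hF₁₁p : IsMPInv F₁₁ F₁₁p)
    (F₂₂p : Matrix (Fin n) (Fin c₄) Hq) (hF₂₂p : IsMPInv F₂₂ F₂₂p)
    (horth₁ : C₁ * (1 - C₂p * C₂) = 0) (horth₂ : (1 - D₁ * D₁p) * D₂ = 0)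
    (horth₃ : C₃ * (1 - C₄p * C₄) = 0) (horth₄ : (1 - D₃ * D₃p) * D₄ = 0)
    (hcon₁ : (1 - C₁ * C₁p) * E₁ = 0) (hcon₁' : E₁ * (1 - D₁p * D₁) = 0)
    (hcon₂ : (1 - C₂ * C₂p) * E₂ = 0) (hcon₂' : E₂ * (1 - D₂p * D₂) = 0)
    (hcon₃ : (1 - C₃ * C₃p) * E₃ = 0) (hcon₃' : E₃ * (1 - D₃p * D₃) = 0)
    (hcon₄ : (1 - C₄ * C₄p) * E₄ = 0) (hcon₄' : E₄ * (1 - D₄p * D₄) = 0)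
    (hG₁ : (1 - F₁₁ * F₁₁p) * (E₂ - C₂ * C₁p * E₁ * D₁p * D₂) = 0)
    (hG₂ : (1 - F₂₂ * F₂₂p) * (E₄ - C₄ * C₃p * E₃ * D₃p * D₄) = 0)
    (F₁ : Matrix (Fin n) (Fin p) Hq)
    (hF₁ : F₁ = C₁p * E₁ * D₁p + (1 - C₁p * C₁) * C₂p * E₂ * D₂p)
    (F₂ : Matrix (Fin n) (Fin p) Hq)
    (hF₂ : F₂ = C₃p * E₃ * D₃p + (1 - C₃p * C₃) * C₄p * E₄ * D₄p)
    (F : Matrix (Fin n) (Fin p) Hq) (hF : F = F₂ - F₁)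
    (C₁₁ : Matrix (Fin n) (Fin n ⊕ Fin n) Hq)
    (hC₁₁ : C₁₁ = Matrix.fromCols (1 - C₂p * C₂) (1 - C₄p * C₄))
    (D₁₁ : Matrix (Fin p ⊕ Fin p) (Fin p) Hq)
    (hD₁₁ : D₁₁ = Matrix.fromRows (1 - D₁ * D₁p) (1 - D₃ * D₃p))
    (C₂₂ : Matrix (Fin n) (Fin n) Hq) (hC₂₂ : C₂₂ = 1 - C₁p * C₁)
    (D₂₂ : Matrix (Fin p) (Fin p) Hq) (hD₂₂ : D₂₂ = 1 - D₂ * D₂p)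
    (C₃₃ : Matrix (Fin n) (Fin n) Hq) (hC₃₃ : C₃₃ = 1 - C₃p * C₃)
    (D₃₃ : Matrix (Fin p) (Fin p) Hq) (hD₃₃ : D₃₃ = 1 - D₄ * D₄p) :
    (∃ Y : Matrix (Fin n) (Fin p) Hq,
        C₁ * Y * D₁ = E₁ ∧ C₂ * Y * D₂ = E₂ ∧ C₃ * Y * D₃ = E₃ ∧ C₄ * Y * D₄ = E₄) ↔
      (∃ V₁ W₁ V₂ W₂ V₃ W₃ : Matrix (Fin n) (Fin p) Hq,
        C₁₁ * Matrix.fromRows V₁ W₁ + Matrix.fromCols V₂ W₂ * D₁₁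
          + C₂₂ * V₃ * D₂₂ + C₃₃ * W₃ * D₃₃ = F) := by
  obtain ⟨hP1, hP2⟩ := pairSol C₁ C₂ D₁ D₂ E₁ E₂ C₁p hC₁p C₂p hC₂p D₁p hD₁p D₂p hD₂p
    F₁₁ hF₁₁ F₁₁p hF₁₁p horth₁ hcon₁ hcon₁' hcon₂' hG₁
  obtain ⟨hQ1, hQ2⟩ := pairSol C₃ C₄ D₃ D₄ E₃ E₄ C₃p hC₃p C₄p hC₄p D₃p hD₃p D₄p hD₄p
    F₂₂ hF₂₂ F₂₂p hF₂₂p horth₃ hcon₃ hcon₃' hcon₄' hG₂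
  rw [← hF₁] at hP1 hP2
  rw [← hF₂] at hQ1 hQ2
  constructor
  · rintro ⟨Y, hY1, hY2, hY3, hY4⟩
    have hZ1 : C₁ * (Y - F₁) * D₁ = 0 := by
      rw [Matrix.mul_sub, Matrix.sub_mul, hY1, hP1, sub_self]
    have hZ2 : C₂ * (Y - F₁) * D₂ = 0 := by
      rw [Matrix.mul_sub, Matrix.sub_mul, hY2, hP2, sub_self]
    have hZ3 : C₃ * (F₂ - Y) * D₃ = 0 := by
      rw [Matrix.mul_sub, Matrix.sub_mul, hY3, hQ1, sub_self]
    have hZ4 : C₄ * (F₂ - Y) * D₄ = 0 := by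
      rw [Matrix.mul_sub, Matrix.sub_mul, hY4, hQ2, sub_self]
    obtain ⟨A1, A2, A3, hA⟩ := pairHom C₁ C₂ D₁ D₂ C₁p C₂p hC₂p D₁p D₂p
      horth₁ horth₂ (Y - F₁) hZ1 hZ2
    obtain ⟨B1, B2, B3, hB⟩ := pairHom C₃ C₄ D₃ D₄ C₃p C₄p hC₄p D₃p D₄p
      horth₃ horth₄ (F₂ - Y) hZ3 hZ4
    refine ⟨A1, B1, A2, B2, A3, B3, ?_⟩
    rw [hC₁₁, hD₁₁, hC₂₂, hD₂₂, hC₃₃, hD₃₃, hF, Matrix.fromCols_mul_fromRows,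
      Matrix.fromCols_mul_fromRows]
    calc (1 - C₂p * C₂) * A1 + (1 - C₄p * C₄) * B1
          + (A2 * (1 - D₁ * D₁p) + B2 * (1 - D₃ * D₃p))
          + (1 - C₁p * C₁) * A3 * (1 - D₂ * D₂p) + (1 - C₃p * C₃) * B3 * (1 - D₄ * D₄p)
        = ((1 - C₂p * C₂) * A1 + A2 * (1 - D₁ * D₁p)
            + (1 - C₁p * C₁) * A3 * (1 - D₂ * D₂p))
          + ((1 - C₄p * C₄) * B1 + B2 * (1 - D₃ * D₃p)
            + (1 - C₃p * C₃) * B3 * (1 - D₄ * D₄p)) := by abel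
      _ = (Y - F₁) + (F₂ - Y) := by rw [hA, hB]
      _ = F₂ - F₁ := by abel
  · rintro ⟨V₁, W₁, V₂, W₂, V₃, W₃, h⟩
    rw [hC₁₁, hD₁₁, hC₂₂, hD₂₂, hC₃₃, hD₃₃, hF, Matrix.fromCols_mul_fromRows,
      Matrix.fromCols_mul_fromRows] at h
    set SV : Matrix (Fin n) (Fin p) Hq :=
      (1 - C₂p * C₂) * V₁ + V₂ * (1 - D₁ * D₁p)
        + (1 - C₁p * C₁) * V₃ * (1 - D₂ * D₂p) with hSV
    set SW : Matrix (Fin n) (Fin p) Hq :=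
      (1 - C₄p * C₄) * W₁ + W₂ * (1 - D₃ * D₃p)
        + (1 - C₃p * C₃) * W₃ * (1 - D₄ * D₄p) with hSW
    have hsum : SV + SW = F₂ - F₁ := by rw [← h, hSV, hSW]; abel
    refine ⟨F₁ + SV, ?_, ?_, ?_, ?_⟩
    · have := (pertSolves C₁ C₂ D₁ D₂ C₁p hC₁p C₂p hC₂p D₁p hD₁p D₂p hD₂p
        horth₁ horth₂ (F₁ + SV) F₁ V₁ V₂ V₃ (by rw [hSV])).1
      rw [this, hP1]
    · have := (pertSolves C₁ C₂ D₁ D₂ C₁p hC₁p C₂p hC₂p D₁p hD₁p D₂p hD₂p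
        horth₁ horth₂ (F₁ + SV) F₁ V₁ V₂ V₃ (by rw [hSV])).2
      rw [this, hP2]
    · have hY' : F₁ + SV = F₂ + ((1 - C₄p * C₄) * (-W₁) + (-W₂) * (1 - D₃ * D₃p)
          + (1 - C₃p * C₃) * (-W₃) * (1 - D₄ * D₄p)) := by
        calc F₁ + SV = (SV + SW) - SW + F₁ := by abel
          _ = (F₂ - F₁) - SW + F₁ := by rw [hsum]
          _ = F₂ - SW := by abel
          _ = _ := by
            rw [hSW]
            simp only [Matrix.mul_neg, Matrix.neg_mul]
            abel
      have := (pertSolves C₃ C₄ D₃ D₄ C₃p hC₃p C₄p hC₄p D₃p hD₃p D₄p hD₄p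
        horth₃ horth₄ (F₁ + SV) F₂ (-W₁) (-W₂) (-W₃) hY').1
      rw [this, hQ1]
    · have hY' : F₁ + SV = F₂ + ((1 - C₄p * C₄) * (-W₁) + (-W₂) * (1 - D₃ * D₃p)
          + (1 - C₃p * C₃) * (-W₃) * (1 - D₄ * D₄p)) := by
        calc F₁ + SV = (SV + SW) - SW + F₁ := by abel
          _ = (F₂ - F₁) - SW + F₁ := by rw [hsum]
          _ = F₂ - SW := by abel
          _ = _ := by
            rw [hSW]
            simp only [Matrix.mul_neg, Matrix.neg_mul]
            abel
      have := (pertSolves C₃ C₄ D₃ D₄ C₃p hC₃p C₄p hC₄p D₃p hD₃p D₄p hD₄p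
        horth₃ horth₄ (F₁ + SV) F₂ (-W₁) (-W₂) (-W₃) hY').2
      rw [this, hQ2]
end
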